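/- arXiv:math-ph/0204007 — 12 statements merged into one kernel-verified Lean document; each statement's English description precedes it below -/
import Mathlib

section
/- The cancellation law: for any three states X, Y, Z of (possibly different) systems, if (X,Z) ≺ (Y,Z) then X ≺ Y. -/
/-- The cancellation law of Lieb–Yngvason: under axioms A1–A6 for the adiabatic
accessibility relation `prec` (with composition `comp` and scaling `scale`),
`(X,Z) ≺ (Y,Z)` implies `X ≺ Y`. -/
theorem cancellation_law {St : Type*} (prec : St → St → Prop)
    (comp : St → St → St) (scale : ℝ → St → St)
    (comp_comm : ∀ X Y, comp X Y = comp Y X)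
    (comp_assoc : ∀ X Y Z, comp (comp X Y) Z = comp X (comp Y Z))
    (scale_one : ∀ X, scale 1 X = X)
    (scale_scale : ∀ (a b : ℝ) (X : St), 0 < a → 0 < b →
      scale a (scale b X) = scale (a * b) X)
    (scale_comp : ∀ (a : ℝ) (X Y : St), 0 < a →
      scale a (comp X Y) = comp (scale a X) (scale a Y))
    (A1 : ∀ X, prec X X)
    (A2 : ∀ X Y Z, prec X Y → prec Y Z → prec X Z)
    (A3 : ∀ X X' Y Y', prec X X' → prec Y Y' → prec (comp X Y) (comp X' Y'))
    (A4 : ∀ (l : ℝ) (X Y : St), 0 < l → prec X Y → prec (scale l X) (scale l Y))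
    (A5 : ∀ (l : ℝ) (X : St), 0 < l → l < 1 →
      prec X (comp (scale (1 - l) X) (scale l X)) ∧
      prec (comp (scale (1 - l) X) (scale l X)) X)
    (A6 : ∀ (X Y Z₀ Z₁ : St) (ε : ℕ → ℝ), (∀ n, 0 < ε n) →
      Filter.Tendsto ε Filter.atTop (nhds 0) →
      (∀ n, prec (comp X (scale (ε n) Z₀)) (comp Y (scale (ε n) Z₁))) →
      prec X Y) :
    ∀ X Y Z : St, prec (comp X Z) (comp Y Z) → prec X Y := by
  intro X Y Z h
  set ε : ℕ → ℝ := fun n => (1/2 : ℝ) ^ n with hε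
  have hεpos : ∀ n, 0 < ε n := fun n => by positivity
  have hmain : ∀ n, prec (comp X (scale (ε n) Z)) (comp Y (scale (ε n) Z)) := by
    intro n
    induction n with
    | zero =>
      simpa [hε, scale_one] using h
    | succ n ih =>
      have h2 : (0:ℝ) < 1/2 := by norm_num
      have hs : prec (comp (scale (1/2) X) (scale (ε (n+1)) Z))
          (comp (scale (1/2) Y) (scale (ε (n+1)) Z)) := by
        have := A4 (1/2) _ _ h2 ih
        rw [scale_comp _ _ _ h2, scale_comp _ _ _ h2,
          scale_scale _ _ _ h2 (hεpos n)] at this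
        have heq : (1/2 : ℝ) * ε n = ε (n+1) := by
          simp [hε, pow_succ, mul_comm]
        rwa [heq] at this
      set T := scale (ε (n+1)) Z with hT
      have hXsplit : prec X (comp (scale (1/2) X) (scale (1/2) X)) ∧
          prec (comp (scale (1/2) X) (scale (1/2) X)) X := by
        have := A5 (1/2) X h2 (by norm_num)
        norm_num at this
        exact this
      have hYsplit : prec Y (comp (scale (1/2) Y) (scale (1/2) Y)) ∧
          prec (comp (scale (1/2) Y) (scale (1/2) Y)) Y := by
        have := A5 (1/2) Y h2 (by norm_num)
        norm_num at this
        exact this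
      have s1 : prec (comp X T) (comp (scale (1/2) X) (comp (scale (1/2) X) T)) := by
        have := A3 _ _ _ _ hXsplit.1 (A1 T)
        rwa [comp_assoc] at this
      have s2 : prec (comp (scale (1/2) X) (comp (scale (1/2) X) T))
          (comp (scale (1/2) X) (comp (scale (1/2) Y) T)) :=
        A3 _ _ _ _ (A1 _) hs
      have s3 : prec (comp (scale (1/2) X) (comp (scale (1/2) Y) T))
          (comp (scale (1/2) Y) (comp (scale (1/2) Y) T)) := by
        have := A3 _ _ _ _ (A1 (scale (1/2) Y)) hs
        rw [← comp_assoc, comp_comm (scale (1/2) Y) (scale (1/2) X), comp_assoc] at this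
        rwa [← comp_assoc] at this ⊢
        -- after rw at ⊢ goal matches? adjust below
      have s4 : prec (comp (scale (1/2) Y) (comp (scale (1/2) Y) T)) (comp Y T) := by
        have := A3 _ _ _ _ hYsplit.2 (A1 T)
        rwa [comp_assoc] at this
      exact A2 _ _ _ (A2 _ _ _ (A2 _ _ _ s1 s2) s3) s4
  exact A6 X Y Z Z ε hεpos (by
    simpa [hε] using tendsto_pow_atTop_nhds_zero_of_lt_one (by norm_num : (0:ℝ) ≤ 1/2) (by norm_num)) hmain
end

section
/- Given reference states X₀ ≺≺ X₁ (i.e., X₀ ≺ X₁ but X₁ ⊀ X₀), for λ, λ' ∈ [0,1] the relation ((1−λ)X₀, λX₁) ≺ ((1−λ')X₀, λ'X₁) holds if and only if λ ≤ λ'. -/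
/-!
Splitting `(1-a)X₀ = (b-a)X₀ + (1-b)X₀` and `bX₁ = (b-a)X₁ + aX₁` shows that, for `0 < a < b < 1`,
the states `((1-a)X₀, aX₁)` and `((1-b)X₀, bX₁)` are equivalent to `((b-a)X₀, W)` and
`((b-a)X₁, W)` with the common part `W = ((1-b)X₀, aX₁)`. So `X₀ ≺ X₁` gives the forward
implication, and conversely `((1-b)X₀, bX₁) ≺ ((1-a)X₀, aX₁)` yields `X₁ ≺ X₀` after cancelling `W`
and rescaling by `(b-a)⁻¹`. The endpoints `0` and `1` reduce to interior parameters via the forward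
implication. Cancellation itself comes from stability: halving repeatedly,
`(X, Z) ≺ (Y, Z)` gives `(X, 2⁻ⁿZ) ≺ (Y, 2⁻ⁿZ)` for all `n`.
-/

/-- The scaled combination `((1-l)X₀, lX₁)`, with the conventions `(1X₀, 0X₁) = X₀`
and `(0X₀, 1X₁) = X₁` at the endpoints. -/
noncomputable def combo {St : Type*} (comp : St → St → St) (scale : ℝ → St → St)
    (X₀ X₁ : St) (l : ℝ) : St :=
  if l = 0 then X₀ else if l = 1 then X₁ else comp (scale (1 - l) X₀) (scale l X₁)

section combo

variable {St : Type*} (comp : St → St → St) (scale : ℝ → St → St) (X₀ X₁ : St)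

theorem combo_zero : combo comp scale X₀ X₁ 0 = X₀ := if_pos rfl

theorem combo_one : combo comp scale X₀ X₁ 1 = X₁ := by simp [combo]

theorem combo_of_mem_Ioo {t : ℝ} (ht : t ∈ Set.Ioo (0 : ℝ) 1) :
    combo comp scale X₀ X₁ t = comp (scale (1 - t) X₀) (scale t X₁) := by
  simp [combo, ht.1.ne', ht.2.ne]

end combo

/-- The fields `refl`, `trans`, `comp_mono`, `scale_mono`, `split_recombine` and `stability`
are the Lieb–Yngvason axioms A1–A6 for `prec`. -/
structure AdiabaticAccessibility (St : Type*) where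
  prec : St → St → Prop
  comp : St → St → St
  scale : ℝ → St → St
  comp_comm : ∀ X Y, comp X Y = comp Y X
  comp_assoc : ∀ X Y Z, comp (comp X Y) Z = comp X (comp Y Z)
  scale_one : ∀ X, scale 1 X = X
  scale_scale : ∀ (a b : ℝ) (X : St), 0 < a → 0 < b → scale a (scale b X) = scale (a * b) X
  scale_comp : ∀ (a : ℝ) (X Y : St), 0 < a → scale a (comp X Y) = comp (scale a X) (scale a Y)
  refl : ∀ X, prec X X
  trans : ∀ X Y Z, prec X Y → prec Y Z → prec X Z
  comp_mono : ∀ X X' Y Y', prec X X' → prec Y Y' → prec (comp X Y) (comp X' Y')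
  scale_mono : ∀ (l : ℝ) (X Y : St), 0 < l → prec X Y → prec (scale l X) (scale l Y)
  split_recombine : ∀ (l : ℝ) (X : St), 0 < l → l < 1 →
    prec X (comp (scale (1 - l) X) (scale l X)) ∧ prec (comp (scale (1 - l) X) (scale l X)) X
  stability : ∀ (X Y Z₀ Z₁ : St) (ε : ℕ → ℝ), (∀ n, 0 < ε n) →
    Filter.Tendsto ε Filter.atTop (nhds 0) →
    (∀ n, prec (comp X (scale (ε n) Z₀)) (comp Y (scale (ε n) Z₁))) → prec X Y

namespace AdiabaticAccessibility

variable {St : Type*} (S : AdiabaticAccessibility St)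

instance : Trans S.prec S.prec S.prec := ⟨S.trans _ _ _⟩

theorem comp_left_comm (X Y Z : St) : S.comp X (S.comp Y Z) = S.comp Y (S.comp X Z) := by
  rw [← S.comp_assoc, S.comp_comm X Y, S.comp_assoc]

theorem comp_mono_right (X : St) {Y Y' : St} (h : S.prec Y Y') :
    S.prec (S.comp X Y) (S.comp X Y') :=
  S.comp_mono _ _ _ _ (S.refl X) h

theorem comp_mono_left {X X' : St} (h : S.prec X X') (Y : St) :
    S.prec (S.comp X Y) (S.comp X' Y) :=
  S.comp_mono _ _ _ _ h (S.refl Y)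

theorem antisymmRel_comp {X X' Y Y' : St} (hX : AntisymmRel S.prec X X')
    (hY : AntisymmRel S.prec Y Y') : AntisymmRel S.prec (S.comp X Y) (S.comp X' Y') :=
  ⟨S.comp_mono _ _ _ _ hX.1 hY.1, S.comp_mono _ _ _ _ hX.2 hY.2⟩

theorem prec_of_scale_prec_scale {a : ℝ} (ha : 0 < a) {X Y : St}
    (h : S.prec (S.scale a X) (S.scale a Y)) : S.prec X Y := by
  have h' := S.scale_mono a⁻¹ _ _ (inv_pos.2 ha) h
  rwa [S.scale_scale _ _ _ (inv_pos.2 ha) ha, S.scale_scale _ _ _ (inv_pos.2 ha) ha,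
    inv_mul_cancel₀ ha.ne', S.scale_one, S.scale_one] at h'

theorem antisymmRel_scale_add {a b : ℝ} (ha : 0 < a) (hb : 0 < b) (X : St) :
    AntisymmRel S.prec (S.scale (a + b) X) (S.comp (S.scale a X) (S.scale b X)) := by
  have hab : 0 < a + b := by positivity
  have hfrac : b / (a + b) < 1 := (div_lt_one hab).2 (by linarith)
  have hsplit := S.split_recombine (b / (a + b)) (S.scale (a + b) X) (by positivity) hfrac
  rwa [S.scale_scale _ _ _ (by linarith) hab, S.scale_scale _ _ _ (by positivity) hab,
    show (1 - b / (a + b)) * (a + b) = a by field_simp; ring,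
    show b / (a + b) * (a + b) = b by field_simp] at hsplit

theorem antisymmRel_comp_scale_add {a b : ℝ} (ha : 0 < a) (hb : 0 < b) (X Y : St) :
    AntisymmRel S.prec (S.comp (S.scale (a + b) X) Y)
      (S.comp (S.scale a X) (S.comp (S.scale b X) Y)) := by
  rw [← S.comp_assoc]
  exact S.antisymmRel_comp (S.antisymmRel_scale_add ha hb X) ⟨S.refl Y, S.refl Y⟩

theorem antisymmRel_comp_scale_half (X : St) :
    AntisymmRel S.prec X (S.comp (S.scale (1 / 2) X) (S.scale (1 / 2) X)) := by
  have h := S.antisymmRel_scale_add one_half_pos one_half_pos X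
  rwa [add_halves, S.scale_one] at h

theorem comp_scale_half_prec {X Y Z : St} (h : S.prec (S.comp X Z) (S.comp Y Z)) :
    S.prec (S.comp X (S.scale (1 / 2) Z)) (S.comp Y (S.scale (1 / 2) Z)) := by
  set X' := S.scale (1 / 2) X
  set Y' := S.scale (1 / 2) Y
  set Z' := S.scale (1 / 2) Z
  have half : S.prec (S.comp X' Z') (S.comp Y' Z') := by
    simpa only [S.scale_comp _ _ _ one_half_pos] using S.scale_mono _ _ _ one_half_pos h
  calc S.prec (S.comp X Z') (S.comp (S.comp X' X') Z') :=
        S.comp_mono_left (S.antisymmRel_comp_scale_half X).1 Z'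
    _ = S.comp X' (S.comp X' Z') := S.comp_assoc ..
    S.prec _ (S.comp X' (S.comp Y' Z')) := S.comp_mono_right X' half
    _ = S.comp Y' (S.comp X' Z') := S.comp_left_comm ..
    S.prec _ (S.comp Y' (S.comp Y' Z')) := S.comp_mono_right Y' half
    _ = S.comp (S.comp Y' Y') Z' := (S.comp_assoc ..).symm
    S.prec _ (S.comp Y Z') := S.comp_mono_left (S.antisymmRel_comp_scale_half Y).2 Z'

theorem prec_of_comp_prec_comp {X Y Z : St} (h : S.prec (S.comp X Z) (S.comp Y Z)) :
    S.prec X Y := by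
  have halved : ∀ n : ℕ, S.prec (S.comp X (S.scale ((1 / 2) ^ n) Z))
      (S.comp Y (S.scale ((1 / 2) ^ n) Z)) := by
    intro n
    induction n with
    | zero => simpa only [pow_zero, S.scale_one] using h
    | succ n ih =>
      simpa only [S.scale_scale _ _ _ one_half_pos (pow_pos one_half_pos n), ← pow_succ']
        using S.comp_scale_half_prec ih
  exact S.stability X Y Z Z _ (fun n => by positivity)
    (tendsto_pow_atTop_nhds_zero_of_lt_one (by norm_num) (by norm_num)) halved

variable {X₀ X₁ : St}

theorem combo_lower_antisymmRel {a b : ℝ} (ha : 0 < a) (hab : a < b) (hb : b < 1) :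
    AntisymmRel S.prec (combo S.comp S.scale X₀ X₁ a)
      (S.comp (S.scale (b - a) X₀) (S.comp (S.scale (1 - b) X₀) (S.scale a X₁))) := by
  rw [combo_of_mem_Ioo _ _ _ _ ⟨ha, by linarith⟩]
  have h := S.antisymmRel_comp_scale_add (sub_pos.2 hab) (sub_pos.2 hb) X₀ (S.scale a X₁)
  rwa [show b - a + (1 - b) = 1 - a by ring] at h

theorem combo_upper_antisymmRel {a b : ℝ} (ha : 0 < a) (hab : a < b) (hb : b < 1) :
    AntisymmRel S.prec (combo S.comp S.scale X₀ X₁ b)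
      (S.comp (S.scale (b - a) X₁) (S.comp (S.scale (1 - b) X₀) (S.scale a X₁))) := by
  rw [combo_of_mem_Ioo _ _ _ _ ⟨by linarith, hb⟩, S.comp_comm (S.scale (1 - b) X₀),
    S.comp_comm (S.scale (1 - b) X₀) (S.scale a X₁)]
  have h := S.antisymmRel_comp_scale_add (sub_pos.2 hab) ha X₁ (S.scale (1 - b) X₀)
  rwa [sub_add_cancel] at h

theorem prec_combo (h01 : S.prec X₀ X₁) {t : ℝ} (ht : t ∈ Set.Icc (0 : ℝ) 1) :
    S.prec X₀ (combo S.comp S.scale X₀ X₁ t) := by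
  rcases ht.1.eq_or_lt with rfl | ht0
  · rw [combo_zero]
    exact S.refl X₀
  rcases ht.2.eq_or_lt with rfl | ht1
  · rwa [combo_one]
  rw [combo_of_mem_Ioo _ _ _ _ ⟨ht0, ht1⟩]
  exact S.trans _ _ _ (S.split_recombine t X₀ ht0 ht1).1
    (S.comp_mono_right _ (S.scale_mono t _ _ ht0 h01))

theorem combo_prec (h01 : S.prec X₀ X₁) {t : ℝ} (ht : t ∈ Set.Icc (0 : ℝ) 1) :
    S.prec (combo S.comp S.scale X₀ X₁ t) X₁ := by
  rcases ht.1.eq_or_lt with rfl | ht0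
  · rwa [combo_zero]
  rcases ht.2.eq_or_lt with rfl | ht1
  · rw [combo_one]
    exact S.refl X₁
  rw [combo_of_mem_Ioo _ _ _ _ ⟨ht0, ht1⟩]
  exact S.trans _ _ _ (S.comp_mono_left (S.scale_mono (1 - t) _ _ (sub_pos.2 ht1) h01) _)
    (S.split_recombine t X₁ ht0 ht1).2

theorem combo_prec_combo_of_le (h01 : S.prec X₀ X₁) {a b : ℝ} (ha : a ∈ Set.Icc (0 : ℝ) 1)
    (hb : b ∈ Set.Icc (0 : ℝ) 1) (hab : a ≤ b) :
    S.prec (combo S.comp S.scale X₀ X₁ a) (combo S.comp S.scale X₀ X₁ b) := by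
  rcases ha.1.eq_or_lt with rfl | ha0
  · rw [combo_zero]
    exact S.prec_combo h01 hb
  rcases hb.2.eq_or_lt with rfl | hb1
  · rw [combo_one]
    exact S.combo_prec h01 ha
  rcases hab.eq_or_lt with rfl | hab
  · exact S.refl _
  calc S.prec (combo S.comp S.scale X₀ X₁ a) _ := (S.combo_lower_antisymmRel ha0 hab hb1).1
    S.prec _ _ := S.comp_mono_left (S.scale_mono _ _ _ (sub_pos.2 hab) h01) _
    S.prec _ (combo S.comp S.scale X₀ X₁ b) := (S.combo_upper_antisymmRel ha0 hab hb1).2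

theorem prec_of_combo_prec_combo_of_lt (h01 : S.prec X₀ X₁) {a b : ℝ}
    (ha : a ∈ Set.Icc (0 : ℝ) 1) (hb : b ∈ Set.Icc (0 : ℝ) 1) (hab : a < b)
    (h : S.prec (combo S.comp S.scale X₀ X₁ b) (combo S.comp S.scale X₀ X₁ a)) :
    S.prec X₁ X₀ := by
  -- move both parameters strictly inside `(0, 1)`, where the splitting is available
  obtain ⟨a', haa', ha'b⟩ := exists_between hab
  obtain ⟨b', hab', hb'b⟩ := exists_between ha'b
  have ha' : a' ∈ Set.Icc (0 : ℝ) 1 := ⟨by linarith [ha.1], by linarith [hb.2]⟩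
  have hb' : b' ∈ Set.Icc (0 : ℝ) 1 := ⟨by linarith [ha.1], by linarith [hb.2]⟩
  have inner : S.prec (combo S.comp S.scale X₀ X₁ b') (combo S.comp S.scale X₀ X₁ a') :=
    calc S.prec (combo S.comp S.scale X₀ X₁ b') (combo S.comp S.scale X₀ X₁ b) :=
          S.combo_prec_combo_of_le h01 hb' hb hb'b.le
      S.prec _ (combo S.comp S.scale X₀ X₁ a) := h
      S.prec _ (combo S.comp S.scale X₀ X₁ a') := S.combo_prec_combo_of_le h01 ha ha' haa'.le
  have ha0 : 0 < a' := by linarith [ha.1]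
  have hb1 : b' < 1 := by linarith [hb.2]
  have swapped := calc
    S.prec _ (combo S.comp S.scale X₀ X₁ b') := (S.combo_upper_antisymmRel ha0 hab' hb1).2
    S.prec _ (combo S.comp S.scale X₀ X₁ a') := inner
    S.prec _ _ := (S.combo_lower_antisymmRel ha0 hab' hb1).1
  exact S.prec_of_scale_prec_scale (sub_pos.2 hab') (S.prec_of_comp_prec_comp swapped)

end AdiabaticAccessibility

/-- Lieb–Yngvason: for reference points `X₀ ≺≺ X₁` and `l, l' ∈ [0,1]`,
`((1−l)X₀, lX₁) ≺ ((1−l')X₀, l'X₁)` if and only if `l ≤ l'`. -/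
theorem combo_prec_iff {St : Type*} (prec : St → St → Prop)
    (comp : St → St → St) (scale : ℝ → St → St)
    (comp_comm : ∀ X Y, comp X Y = comp Y X)
    (comp_assoc : ∀ X Y Z, comp (comp X Y) Z = comp X (comp Y Z))
    (scale_one : ∀ X, scale 1 X = X)
    (scale_scale : ∀ (a b : ℝ) (X : St), 0 < a → 0 < b →
      scale a (scale b X) = scale (a * b) X)
    (scale_comp : ∀ (a : ℝ) (X Y : St), 0 < a →
      scale a (comp X Y) = comp (scale a X) (scale a Y))
    (A1 : ∀ X, prec X X)
    (A2 : ∀ X Y Z, prec X Y → prec Y Z → prec X Z)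
    (A3 : ∀ X X' Y Y', prec X X' → prec Y Y' → prec (comp X Y) (comp X' Y'))
    (A4 : ∀ (l : ℝ) (X Y : St), 0 < l → prec X Y → prec (scale l X) (scale l Y))
    (A5 : ∀ (l : ℝ) (X : St), 0 < l → l < 1 →
      prec X (comp (scale (1 - l) X) (scale l X)) ∧
      prec (comp (scale (1 - l) X) (scale l X)) X)
    (A6 : ∀ (X Y Z₀ Z₁ : St) (ε : ℕ → ℝ), (∀ n, 0 < ε n) →
      Filter.Tendsto ε Filter.atTop (nhds 0) →
      (∀ n, prec (comp X (scale (ε n) Z₀)) (comp Y (scale (ε n) Z₁))) →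
      prec X Y)
    (X₀ X₁ : St) (href : prec X₀ X₁) (hirr : ¬ prec X₁ X₀)
    (l l' : ℝ) (hl : l ∈ Set.Icc (0:ℝ) 1) (hl' : l' ∈ Set.Icc (0:ℝ) 1) :
    prec (combo comp scale X₀ X₁ l) (combo comp scale X₀ X₁ l') ↔ l ≤ l' := by
  let S : AdiabaticAccessibility St :=
    ⟨prec, comp, scale, comp_comm, comp_assoc, scale_one, scale_scale, scale_comp,
      A1, A2, A3, A4, A5, A6⟩
  exact ⟨fun h => not_lt.1 fun hlt => hirr (S.prec_of_combo_prec_combo_of_lt href hl' hl hlt h),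
    S.combo_prec_combo_of_le href hl hl'⟩
end

section
/- If a relation ≺ satisfies A1–A7 on a state space Γ ⊂ ℝ^N of a simple system, then the existence of irreversible processes (for every X ∈ Γ there is Y ∈ Γ with X ≺≺ Y) implies Carathéodory's principle (in every neighborhood of every X ∈ Γ there is a Z ∈ Γ with X ⊀ Z). -/
/-- Lieb–Yngvason Lemma 1, (a) ⟹ (b): for a simple system Γ ⊆ ℝ^N satisfying
A1–A7, the existence of irreversible processes implies Carathéodory's principle. -/
theorem irreversible_implies_caratheodory {N : ℕ}
    {St : Type*} (prec : St → St → Prop)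
    (comp : St → St → St) (scale : ℝ → St → St)
    (ι : EuclideanSpace ℝ (Fin N) → St)
    (Γ : Set (EuclideanSpace ℝ (Fin N)))
    (hΓopen : IsOpen Γ) (hΓconv : Convex ℝ Γ)
    (comp_comm : ∀ X Y, comp X Y = comp Y X)
    (comp_assoc : ∀ X Y Z, comp (comp X Y) Z = comp X (comp Y Z))
    (scale_one : ∀ X, scale 1 X = X)
    (scale_scale : ∀ (a b : ℝ) (X : St), 0 < a → 0 < b →
      scale a (scale b X) = scale (a * b) X)
    (scale_comp : ∀ (a : ℝ) (X Y : St), 0 < a →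
      scale a (comp X Y) = comp (scale a X) (scale a Y))
    -- scaling of states of the simple system is scalar multiplication in ℝ^N
    (hscale : ∀ (t : ℝ) (X : EuclideanSpace ℝ (Fin N)), 0 < t →
      scale t (ι X) = ι (t • X))
    (A1 : ∀ X, prec X X)
    (A2 : ∀ X Y Z, prec X Y → prec Y Z → prec X Z)
    (A3 : ∀ X Xp Y Yp, prec X Xp → prec Y Yp → prec (comp X Y) (comp Xp Yp))
    (A4 : ∀ (l : ℝ) (X Y : St), 0 < l → prec X Y → prec (scale l X) (scale l Y))
    (A5 : ∀ (l : ℝ) (X : St), 0 < l → l < 1 →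
      prec X (comp (scale (1 - l) X) (scale l X)) ∧
      prec (comp (scale (1 - l) X) (scale l X)) X)
    (A6 : ∀ (X Y Z₀ Z₁ : St) (ε : ℕ → ℝ), (∀ n, 0 < ε n) →
      Filter.Tendsto ε Filter.atTop (nhds 0) →
      (∀ n, prec (comp X (scale (ε n) Z₀)) (comp Y (scale (ε n) Z₁))) →
      prec X Y)
    (A7 : ∀ (t : ℝ) (X Y : EuclideanSpace ℝ (Fin N)), X ∈ Γ → Y ∈ Γ →
      0 < t → t < 1 →
      prec (comp (scale t (ι X)) (scale (1 - t) (ι Y))) (ι (t • X + (1 - t) • Y))) :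
    (∀ X ∈ Γ, ∃ Y ∈ Γ, prec (ι X) (ι Y) ∧ ¬ prec (ι Y) (ι X)) →
    ∀ X ∈ Γ, ∀ ε : ℝ, 0 < ε → ∃ Z ∈ Γ, dist Z X < ε ∧ ¬ prec (ι X) (ι Z) := by

  intro hirr X hX ε hε
  by_contra hcon
  push_neg at hcon
  obtain ⟨Y, hYΓ, hXY, hYX⟩ := hirr X hX
  -- cancellation law, derived from A1–A6
  have cancel : ∀ A B C, prec (comp A C) (comp B C) → prec A B := by
    intro A B C h
    have key : ∀ n : ℕ, prec (comp A (scale ((1/2 : ℝ)^n) C))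
        (comp B (scale ((1/2 : ℝ)^n) C)) := by
      intro n
      induction n with
      | zero => simpa [scale_one] using h
      | succ n ih =>
        set e : ℝ := (1/2 : ℝ)^n with he
        have hepos : 0 < e := by positivity
        have h2 : (0:ℝ) < 1/2 := by norm_num
        have hmul : (1/2 : ℝ) * e = (1/2)^(n+1) := by rw [pow_succ]; ring
        have hsplitA := A5 (1/2) A h2 (by norm_num)
        have hsplitB := A5 (1/2) B h2 (by norm_num)
        have h12 : (1 : ℝ) - 1/2 = 1/2 := by norm_num
        rw [h12] at hsplitA hsplitB
        set a : St := scale (1/2) A with ha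
        set b : St := scale (1/2) B with hb
        set c : St := scale ((1/2 : ℝ)^(n+1)) C with hc
        have hhalf : ∀ D, comp (scale (1/2:ℝ) D) c = scale (1/2) (comp D (scale e C)) := by
          intro D
          rw [scale_comp _ _ _ h2, scale_scale _ _ _ h2 (by positivity), hmul]
        have h' : prec (comp a c) (comp b c) := by
          rw [ha, hb, hhalf A, hhalf B]
          exact A4 _ _ _ h2 ih
        have h1 : prec (comp A c) (comp a (comp a c)) := by
          have := A3 _ _ _ _ hsplitA.1 (A1 c)
          rwa [comp_assoc] at this
        have e2 : comp a (comp b c) = comp (comp a c) b := by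
          rw [comp_comm b c, ← comp_assoc]
        have h2' : prec (comp a (comp a c)) (comp (comp a c) b) := by
          rw [← e2]; exact A3 _ _ _ _ (A1 a) h'
        have h3 : prec (comp (comp a c) b) (comp (comp b c) b) := A3 _ _ _ _ h' (A1 b)
        have e3 : comp (comp b c) b = comp (comp b b) c := by
          rw [comp_assoc, comp_comm c b, ← comp_assoc]
        rw [e3] at h3
        have h4 : prec (comp (comp b b) c) (comp B c) := A3 _ _ _ _ hsplitB.2 (A1 c)
        exact A2 _ _ _ h1 (A2 _ _ _ h2' (A2 _ _ _ h3 h4))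
    exact A6 A B C C (fun n => (1/2:ℝ)^n) (fun n => by positivity)
      (tendsto_pow_atTop_nhds_zero_of_lt_one (by norm_num) (by norm_num)) key
  -- geometry: pick a point Z slightly on the far side of X from Y
  obtain ⟨δ, hδpos, hball⟩ := Metric.isOpen_iff.mp hΓopen X hX
  set t : ℝ := min ε δ / (2 * (dist X Y + 1)) with ht
  have htpos : 0 < t := by
    apply div_pos (lt_min hε hδpos)
    positivity
  have h1t : (0:ℝ) < 1 + t := by linarith
  set s : ℝ := t / (1 + t) with hs
  have hspos : 0 < s := div_pos htpos h1t
  have hslt1 : s < 1 := by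
    rw [hs, div_lt_one h1t]; linarith
  have h1s : 0 < 1 - s := by linarith
  set Z : EuclideanSpace ℝ (Fin N) := X + t • (X - Y) with hZ
  have hdistZX : dist Z X < min ε δ := by
    have h1 : dist Z X = t * dist X Y := by
      rw [hZ, dist_eq_norm, add_sub_cancel_left, norm_smul, Real.norm_of_nonneg htpos.le,
        ← dist_eq_norm]
    rw [h1, ht]
    rw [div_mul_eq_mul_div, div_lt_iff₀ (by positivity)]
    have hd : (0:ℝ) < dist X Y + 1 := by positivity
    have h2 : (0:ℝ) < min ε δ := lt_min hε hδpos
    nlinarith [dist_nonneg (x := X) (y := Y)]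
  have hZΓ : Z ∈ Γ := hball (by
    simp only [Metric.mem_ball]
    exact lt_of_lt_of_le hdistZX (min_le_right _ _))
  have hXZ : prec (ι X) (ι Z) :=
    hcon Z hZΓ (lt_of_lt_of_le hdistZX (min_le_left _ _))
  -- X is the convex combination (1-s) Z + s Y
  have hcomb : (1 - s) • Z + s • Y = X := by
    rw [hZ, hs]
    have h1t' : (1:ℝ) + t ≠ 0 := ne_of_gt h1t
    match_scalars <;> field_simp <;> ring
  have hA7 := A7 (1 - s) Z Y hZΓ hYΓ h1s (by linarith)
  have hss : (1:ℝ) - (1 - s) = s := by ring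
  rw [hss, hcomb] at hA7
  -- chain of processes
  have hA : prec (comp (scale (1-s) (ι X)) (scale s (ι Y)))
      (comp (scale (1-s) (ι Z)) (scale s (ι Y))) :=
    A3 _ _ _ _ (A4 (1-s) _ _ h1s hXZ) (A1 _)
  have hC := (A5 s (ι X) hspos hslt1).1
  have hchain : prec (comp (scale (1-s) (ι X)) (scale s (ι Y)))
      (comp (scale (1-s) (ι X)) (scale s (ι X))) :=
    A2 _ _ _ hA (A2 _ _ _ hA7 hC)
  rw [comp_comm (scale (1-s) (ι X)) (scale s (ι Y)),
    comp_comm (scale (1-s) (ι X)) (scale s (ι X))] at hchain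
  have hsY : prec (scale s (ι Y)) (scale s (ι X)) := cancel _ _ _ hchain
  have hfin : prec (ι Y) (ι X) := by
    have huns : ∀ W, scale s⁻¹ (scale s W) = W := by
      intro W
      rw [scale_scale _ _ _ (by positivity) hspos, inv_mul_cancel₀ (ne_of_gt hspos), scale_one]
    have := A4 s⁻¹ _ _ (by positivity) hsY
    rwa [huns, huns] at this
  exact hYX hfin
end

section
/- If a relation ≺ satisfies A1–A7 on a simple system Γ ⊂ ℝ^N and all forward sectors A_X have interior points, then Carathéodory's principle (in every neighborhood of every X there is a Z with X ⊀ Z) implies the existence of irreversible processes (for every X ∈ Γ there is Y with X ≺≺ Y). -/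
/-- Lieb–Yngvason Lemma 1, (b) ⟹ (a): for a simple system Γ ⊆ ℝ^N satisfying
A1–A7, if all forward sectors have interior points then Carathéodory's principle
implies the existence of irreversible processes. -/
theorem caratheodory_implies_irreversible {N : ℕ}
    {St : Type*} (prec : St → St → Prop)
    (comp : St → St → St) (scale : ℝ → St → St)
    (ι : EuclideanSpace ℝ (Fin N) → St)
    (Γ : Set (EuclideanSpace ℝ (Fin N)))
    (hΓopen : IsOpen Γ) (hΓconv : Convex ℝ Γ)
    (comp_comm : ∀ X Y, comp X Y = comp Y X)
    (comp_assoc : ∀ X Y Z, comp (comp X Y) Z = comp X (comp Y Z))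
    (scale_one : ∀ X, scale 1 X = X)
    (scale_scale : ∀ (a b : ℝ) (X : St), 0 < a → 0 < b →
      scale a (scale b X) = scale (a * b) X)
    (scale_comp : ∀ (a : ℝ) (X Y : St), 0 < a →
      scale a (comp X Y) = comp (scale a X) (scale a Y))
    -- scaling of states of the simple system is scalar multiplication in ℝ^N
    (hscale : ∀ (t : ℝ) (X : EuclideanSpace ℝ (Fin N)), 0 < t →
      scale t (ι X) = ι (t • X))
    (A1 : ∀ X, prec X X)
    (A2 : ∀ X Y Z, prec X Y → prec Y Z → prec X Z)
    (A3 : ∀ X Xp Y Yp, prec X Xp → prec Y Yp → prec (comp X Y) (comp Xp Yp))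
    (A4 : ∀ (l : ℝ) (X Y : St), 0 < l → prec X Y → prec (scale l X) (scale l Y))
    (A5 : ∀ (l : ℝ) (X : St), 0 < l → l < 1 →
      prec X (comp (scale (1 - l) X) (scale l X)) ∧
      prec (comp (scale (1 - l) X) (scale l X)) X)
    (A6 : ∀ (X Y Z₀ Z₁ : St) (ε : ℕ → ℝ), (∀ n, 0 < ε n) →
      Filter.Tendsto ε Filter.atTop (nhds 0) →
      (∀ n, prec (comp X (scale (ε n) Z₀)) (comp Y (scale (ε n) Z₁))) →
      prec X Y)
    (A7 : ∀ (t : ℝ) (X Y : EuclideanSpace ℝ (Fin N)), X ∈ Γ → Y ∈ Γ →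
      0 < t → t < 1 →
      prec (comp (scale t (ι X)) (scale (1 - t) (ι Y))) (ι (t • X + (1 - t) • Y)))
    (hint : ∀ X ∈ Γ, (interior {Y | Y ∈ Γ ∧ prec (ι X) (ι Y)}).Nonempty) :
    (∀ X ∈ Γ, ∀ ε : ℝ, 0 < ε → ∃ Z ∈ Γ, dist Z X < ε ∧ ¬ prec (ι X) (ι Z)) →
    ∀ X ∈ Γ, ∃ Y ∈ Γ, prec (ι X) (ι Y) ∧ ¬ prec (ι Y) (ι X) := by
  intro hCara X hX
  by_contra h
  push_neg at h
  obtain ⟨W, hW⟩ := hint X hX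
  have hWS : W ∈ {Y | Y ∈ Γ ∧ prec (ι X) (ι Y)} := interior_subset hW
  obtain ⟨ε, hε, hball⟩ := Metric.isOpen_iff.mp isOpen_interior W hW
  obtain ⟨Z, hZΓ, hZd, hZn⟩ := hCara W hWS.1 ε hε
  have hZS : Z ∈ {Y | Y ∈ Γ ∧ prec (ι X) (ι Y)} :=
    interior_subset (hball (Metric.mem_ball.mpr hZd))
  exact hZn (A2 _ _ _ (h W hWS.1 hWS.2) hZS.2)
end

section
/- Under axioms A1–A7 for a simple system Γ (an open convex subset of ℝ^{n+1}), every forward sector A_X = {Y ∈ Γ : X ≺ Y} is a closed subset of Γ (relative to Γ). -/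
/-!
The forward sector `A_X` is convex: split `X` into `aX` and `bX`, move the pieces by A3 and A4
and recombine them with A7. In finite dimensions a point `Y` of the closure of a convex set is
the endpoint of an open segment inside it (take the other endpoint in the relative interior).
As `Γ` is open, the segment extends beyond `Y` to some `C ∈ Γ`, so `Y + ε (Y - C) ∈ A_X` for all
small `ε > 0`. Recombining this state with `εC` yields `(1 + ε) Y`, whence
`(X, εC) ≺ (Y + ε (Y - C), εC) ≺ (1 + ε) Y ≺ (Y, εY)`, and stability (A6) gives `X ≺ Y`.
-/

open Set Filter Topology

section ConvexGeometry

variable {E : Type*} [NormedAddCommGroup E] [NormedSpace ℝ E] [FiniteDimensional ℝ E]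
  {s : Set E}

theorem Convex.exists_openSegment_subset_of_zero_mem (hs : Convex ℝ s) (h0 : (0 : E) ∈ s)
    {y : E} (hy : y ∈ closure s) : ∃ z, openSegment ℝ y z ⊆ s := by
  let f := (Submodule.span ℝ s).subtype
  have hs_image : f '' (f ⁻¹' s) = s :=
    image_preimage_eq_of_subset (by simp [f, Submodule.subset_span])
  have ht : Convex ℝ (f ⁻¹' s) := hs.linear_preimage f
  have h0t : 0 ∈ f ⁻¹' s := h0
  have hspan : affineSpan ℝ (f ⁻¹' s) = ⊤ := by
    rw [AffineSubspace.affineSpan_eq_top_iff_vectorSpan_eq_top_of_nonempty _ _ _ ⟨0, h0t⟩,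
      vectorSpan_eq_span_vsub_set_right ℝ h0t]
    simp [f]
  obtain ⟨z, hz⟩ := ht.interior_nonempty_iff_affineSpan_eq_top.2 hspan
  have hyV : y ∈ Submodule.span ℝ s :=
    (Submodule.closed_of_finiteDimensional _).closure_subset_iff.2 Submodule.subset_span hy
  have hyt : ⟨y, hyV⟩ ∈ closure (f ⁻¹' s) := by
    rw [Topology.IsInducing.subtypeVal.closure_eq_preimage_closure_image]
    change y ∈ closure (f '' (f ⁻¹' s))
    rwa [hs_image]
  refine ⟨z, ?_⟩
  have hseg := (ht.openSegment_interior_closure_subset_interior hz hyt).trans interior_subset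
  rw [openSegment_symm] at hseg
  have := image_mono (f := f.toAffineMap) hseg
  rwa [image_openSegment, LinearMap.coe_toAffineMap, hs_image] at this

theorem Convex.exists_openSegment_subset_of_mem_closure (hs : Convex ℝ s) (hne : s.Nonempty)
    {y : E} (hy : y ∈ closure s) : ∃ z, openSegment ℝ y z ⊆ s := by
  obtain ⟨p, hp⟩ := hne
  have hy' : y - p ∈ closure ((p + ·) ⁻¹' s) := by
    change y - p ∈ closure (Homeomorph.addLeft p ⁻¹' s)
    rw [← Homeomorph.preimage_closure]
    simpa using hy
  obtain ⟨z, hz⟩ := (hs.translate_preimage_right p).exists_openSegment_subset_of_zero_mem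
    (by simpa) hy'
  refine ⟨p + z, ?_⟩
  rw [← add_sub_cancel p y, ← openSegment_translate_image]
  exact image_subset_iff.2 hz

end ConvexGeometry

theorem IsOpen.exists_add_smul_sub_mem_openSegment {E : Type*} [NormedAddCommGroup E]
    [NormedSpace ℝ E] {Γ : Set E} (hΓ : IsOpen Γ) {y : E} (hy : y ∈ Γ) (z : E) :
    ∃ c ∈ Γ, ∃ δ > (0 : ℝ), ∀ ε : ℝ, 0 < ε → ε < δ → y + ε • (y - c) ∈ openSegment ℝ y z := by
  have hcont : Tendsto (fun ρ : ℝ ↦ y - ρ • (z - y)) (𝓝 0) (𝓝 y) := by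
    simpa using (by fun_prop : Continuous fun ρ : ℝ ↦ y - ρ • (z - y)).tendsto 0
  obtain ⟨ρ, hρΓ, hρ⟩ : ∃ ρ : ℝ, y - ρ • (z - y) ∈ Γ ∧ 0 < ρ :=
    (((hcont.eventually (hΓ.mem_nhds hy)).filter_mono nhdsWithin_le_nhds).and
      (self_mem_nhdsWithin (s := Ioi 0))).exists
  refine ⟨_, hρΓ, ρ⁻¹, inv_pos.2 hρ, fun ε hε hερ ↦ ?_⟩
  rw [openSegment_eq_image']
  refine ⟨ε * ρ, ⟨by positivity, ?_⟩, by module⟩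
  calc ε * ρ < ρ⁻¹ * ρ := by gcongr
    _ = 1 := inv_mul_cancel₀ hρ.ne'

section SimpleSystem

structure SimpleSystemAxioms {St E : Type*} [AddCommGroup E] [Module ℝ E]
    (prec : St → St → Prop) (comp : St → St → St) (scale : ℝ → St → St) (ι : E → St)
    (Γ : Set E) : Prop where
  scale_scale : ∀ (a b : ℝ) (X : St), 0 < a → 0 < b → scale a (scale b X) = scale (a * b) X
  scale_comp : ∀ (a : ℝ) (X Y : St), 0 < a → scale a (comp X Y) = comp (scale a X) (scale a Y)
  scale_embed : ∀ (t : ℝ) (X : E), 0 < t → scale t (ι X) = ι (t • X)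
  refl : ∀ X, prec X X
  trans : ∀ X Y Z, prec X Y → prec Y Z → prec X Z
  consistency : ∀ X Xp Y Yp, prec X Xp → prec Y Yp → prec (comp X Y) (comp Xp Yp)
  scaling_invariance : ∀ (l : ℝ) (X Y : St), 0 < l → prec X Y → prec (scale l X) (scale l Y)
  splitting : ∀ (l : ℝ) (X : St), 0 < l → l < 1 → prec X (comp (scale (1 - l) X) (scale l X))
  stability : ∀ (X Y Z₀ Z₁ : St) (ε : ℕ → ℝ), (∀ n, 0 < ε n) → Tendsto ε atTop (𝓝 0) →
    (∀ n, prec (comp X (scale (ε n) Z₀)) (comp Y (scale (ε n) Z₁))) → prec X Y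
  convex_combination : ∀ (t : ℝ) (X Y : E), X ∈ Γ → Y ∈ Γ → 0 < t → t < 1 →
    prec (comp (scale t (ι X)) (scale (1 - t) (ι Y))) (ι (t • X + (1 - t) • Y))

variable {St E : Type*} [AddCommGroup E] [Module ℝ E] {prec : St → St → Prop}
  {comp : St → St → St} {scale : ℝ → St → St} {ι : E → St} {Γ : Set E}

def forwardSector (prec : St → St → Prop) (ι : E → St) (Γ : Set E) (X : E) : Set E :=
  {Z | Z ∈ Γ ∧ prec (ι X) (ι Z)}

namespace SimpleSystemAxioms

theorem smul_prec_smul (h : SimpleSystemAxioms prec comp scale ι Γ) {a : ℝ} (ha : 0 < a)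
    {P Q : E} (hPQ : prec (ι P) (ι Q)) : prec (ι (a • P)) (ι (a • Q)) := by
  simpa only [h.scale_embed a _ ha] using h.scaling_invariance a _ _ ha hPQ

theorem add_smul_prec_comp (h : SimpleSystemAxioms prec comp scale ι Γ) {a b : ℝ} (ha : 0 < a)
    (hb : 0 < b) (P : E) : prec (ι ((a + b) • P)) (comp (ι (a • P)) (ι (b • P))) := by
  have hab : 0 < a + b := by positivity
  have hl : b / (a + b) < 1 := (div_lt_one hab).2 (by linarith)
  have hsplit := h.splitting (b / (a + b)) (ι ((a + b) • P)) (by positivity) hl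
  rwa [h.scale_embed _ _ (by linarith), h.scale_embed _ _ (by positivity), smul_smul, smul_smul,
    one_sub_div hab.ne', add_sub_cancel_right, div_mul_cancel₀ _ hab.ne',
    div_mul_cancel₀ _ hab.ne'] at hsplit

theorem comp_prec_add (h : SimpleSystemAxioms prec comp scale ι Γ) {a b : ℝ} (ha : 0 < a)
    (hb : 0 < b) {U V : E} (hU : U ∈ Γ) (hV : V ∈ Γ) :
    prec (comp (ι (a • U)) (ι (b • V))) (ι (a • U + b • V)) := by
  have hab : 0 < a + b := by positivity
  have ht : a / (a + b) < 1 := (div_lt_one hab).2 (by linarith)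
  have h1t : 1 - a / (a + b) = b / (a + b) := by field_simp; ring
  have hmix := h.scaling_invariance (a + b) _ _ hab
    (h.convex_combination (a / (a + b)) U V hU hV (by positivity) ht)
  rwa [h1t, h.scale_comp _ _ _ hab, h.scale_scale _ _ _ hab (by positivity),
    h.scale_scale _ _ _ hab (by positivity), h.scale_embed _ _ (by positivity),
    h.scale_embed _ _ (by positivity), h.scale_embed _ _ hab, smul_add, smul_smul, smul_smul,
    mul_div_cancel₀ _ hab.ne', mul_div_cancel₀ _ hab.ne'] at hmix

theorem convex_forwardSector (h : SimpleSystemAxioms prec comp scale ι Γ) (hΓ : Convex ℝ Γ)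
    (X : E) : Convex ℝ (forwardSector prec ι Γ X) := by
  rintro Z₁ ⟨hZ₁, hXZ₁⟩ Z₂ ⟨hZ₂, hXZ₂⟩ a b ha hb hab
  refine ⟨hΓ hZ₁ hZ₂ ha hb hab, ?_⟩
  rcases ha.eq_or_lt with rfl | ha
  · simpa [show b = 1 by linarith] using hXZ₂
  rcases hb.eq_or_lt with rfl | hb
  · simpa [show a = 1 by linarith] using hXZ₁
  have hsplit := h.add_smul_prec_comp ha hb X
  rw [hab, one_smul] at hsplit
  exact h.trans _ _ _ hsplit <| h.trans _ _ _
    (h.consistency _ _ _ _ (h.smul_prec_smul ha hXZ₁) (h.smul_prec_smul hb hXZ₂))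
    (h.comp_prec_add ha hb hZ₁ hZ₂)

theorem comp_scale_prec_of_mem_forwardSector (h : SimpleSystemAxioms prec comp scale ι Γ)
    {X Y C : E} (hC : C ∈ Γ) {ε : ℝ} (hε : 0 < ε)
    (hM : Y + ε • (Y - C) ∈ forwardSector prec ι Γ X) :
    prec (comp (ι X) (scale ε (ι C))) (comp (ι Y) (scale ε (ι Y))) := by
  obtain ⟨hMΓ, hXM⟩ := hM
  have hmerge := h.comp_prec_add one_pos hε hMΓ hC
  have hsplit := h.add_smul_prec_comp one_pos hε Y
  rw [one_smul, show Y + ε • (Y - C) + ε • C = (1 + ε) • Y by module] at hmerge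
  rw [one_smul] at hsplit
  rw [h.scale_embed _ _ hε, h.scale_embed _ _ hε]
  exact h.trans _ _ _ (h.consistency _ _ _ _ hXM (h.refl _)) (h.trans _ _ _ hmerge hsplit)

theorem prec_of_forall_comp_scale_prec (h : SimpleSystemAxioms prec comp scale ι Γ)
    {X Y Z₀ Z₁ : St} {δ : ℝ} (hδ : 0 < δ)
    (H : ∀ ε, 0 < ε → ε < δ → prec (comp X (scale ε Z₀)) (comp Y (scale ε Z₁))) :
    prec X Y := by
  have hpos (n : ℕ) : 0 < δ / 2 / (n + 1) := by positivity
  have hlt (n : ℕ) : δ / 2 / (n + 1) < δ :=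
    (div_le_self (by positivity) (by simp)).trans_lt (half_lt_self hδ)
  refine h.stability X Y Z₀ Z₁ _ hpos ?_ fun n ↦ H _ (hpos n) (hlt n)
  simpa [Function.comp_def] using
    (tendsto_const_div_atTop_nhds_zero_nat (δ / 2)).comp (tendsto_add_atTop_nat 1)

end SimpleSystemAxioms

end SimpleSystem

theorem forward_sector_closed_general {N : ℕ}
    {St : Type*} (prec : St → St → Prop)
    (comp : St → St → St) (scale : ℝ → St → St)
    (ι : EuclideanSpace ℝ (Fin N) → St)
    (Γ : Set (EuclideanSpace ℝ (Fin N)))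
    (hΓopen : IsOpen Γ) (hΓconv : Convex ℝ Γ)
    (scale_scale : ∀ (a b : ℝ) (X : St), 0 < a → 0 < b →
      scale a (scale b X) = scale (a * b) X)
    (scale_comp : ∀ (a : ℝ) (X Y : St), 0 < a →
      scale a (comp X Y) = comp (scale a X) (scale a Y))
    -- scaling of states of the simple system is scalar multiplication in ℝ^N
    (hscale : ∀ (t : ℝ) (X : EuclideanSpace ℝ (Fin N)), 0 < t →
      scale t (ι X) = ι (t • X))
    (A1 : ∀ X, prec X X)
    (A2 : ∀ X Y Z, prec X Y → prec Y Z → prec X Z)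
    (A3 : ∀ X Xp Y Yp, prec X Xp → prec Y Yp → prec (comp X Y) (comp Xp Yp))
    (A4 : ∀ (l : ℝ) (X Y : St), 0 < l → prec X Y → prec (scale l X) (scale l Y))
    (A5 : ∀ (l : ℝ) (X : St), 0 < l → l < 1 →
      prec X (comp (scale (1 - l) X) (scale l X)) ∧
      prec (comp (scale (1 - l) X) (scale l X)) X)
    (A6 : ∀ (X Y Z₀ Z₁ : St) (ε : ℕ → ℝ), (∀ n, 0 < ε n) →
      Filter.Tendsto ε Filter.atTop (nhds 0) →
      (∀ n, prec (comp X (scale (ε n) Z₀)) (comp Y (scale (ε n) Z₁))) →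
      prec X Y)
    (A7 : ∀ (t : ℝ) (X Y : EuclideanSpace ℝ (Fin N)), X ∈ Γ → Y ∈ Γ →
      0 < t → t < 1 →
      prec (comp (scale t (ι X)) (scale (1 - t) (ι Y))) (ι (t • X + (1 - t) • Y))) :
    ∀ X ∈ Γ, ∀ Y ∈ Γ, Y ∈ closure {Z | Z ∈ Γ ∧ prec (ι X) (ι Z)} →
      prec (ι X) (ι Y) := by
  intro X hX Y hY hYcl
  have h : SimpleSystemAxioms prec comp scale ι Γ :=
    ⟨scale_scale, scale_comp, hscale, A1, A2, A3, A4, fun l X hl hl1 ↦ (A5 l X hl hl1).1, A6, A7⟩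
  obtain ⟨Z, hZ⟩ := (h.convex_forwardSector hΓconv X).exists_openSegment_subset_of_mem_closure
    ⟨X, hX, A1 _⟩ hYcl
  obtain ⟨C, hC, δ, hδ, hray⟩ := hΓopen.exists_add_smul_sub_mem_openSegment hY Z
  exact h.prec_of_forall_comp_scale_prec hδ fun ε hε hεδ ↦
    h.comp_scale_prec_of_mem_forwardSector hC hε (hZ (hray ε hε hεδ))

/-- Step 1 in the proof of Theorem 3 of Lieb–Yngvason: under A1–A7, every forward
sector A_X = {Y ∈ Γ : X ≺ Y} of a simple system is relatively closed in Γ. -/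
theorem forward_sector_closed {N : ℕ}
    {St : Type*} (prec : St → St → Prop)
    (comp : St → St → St) (scale : ℝ → St → St)
    (ι : EuclideanSpace ℝ (Fin N) → St)
    (Γ : Set (EuclideanSpace ℝ (Fin N)))
    (hΓopen : IsOpen Γ) (hΓconv : Convex ℝ Γ)
    (comp_comm : ∀ X Y, comp X Y = comp Y X)
    (comp_assoc : ∀ X Y Z, comp (comp X Y) Z = comp X (comp Y Z))
    (scale_one : ∀ X, scale 1 X = X)
    (scale_scale : ∀ (a b : ℝ) (X : St), 0 < a → 0 < b →
      scale a (scale b X) = scale (a * b) X)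
    (scale_comp : ∀ (a : ℝ) (X Y : St), 0 < a →
      scale a (comp X Y) = comp (scale a X) (scale a Y))
    -- scaling of states of the simple system is scalar multiplication in ℝ^N
    (hscale : ∀ (t : ℝ) (X : EuclideanSpace ℝ (Fin N)), 0 < t →
      scale t (ι X) = ι (t • X))
    (A1 : ∀ X, prec X X)
    (A2 : ∀ X Y Z, prec X Y → prec Y Z → prec X Z)
    (A3 : ∀ X Xp Y Yp, prec X Xp → prec Y Yp → prec (comp X Y) (comp Xp Yp))
    (A4 : ∀ (l : ℝ) (X Y : St), 0 < l → prec X Y → prec (scale l X) (scale l Y))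
    (A5 : ∀ (l : ℝ) (X : St), 0 < l → l < 1 →
      prec X (comp (scale (1 - l) X) (scale l X)) ∧
      prec (comp (scale (1 - l) X) (scale l X)) X)
    (A6 : ∀ (X Y Z₀ Z₁ : St) (ε : ℕ → ℝ), (∀ n, 0 < ε n) →
      Filter.Tendsto ε Filter.atTop (nhds 0) →
      (∀ n, prec (comp X (scale (ε n) Z₀)) (comp Y (scale (ε n) Z₁))) →
      prec X Y)
    (A7 : ∀ (t : ℝ) (X Y : EuclideanSpace ℝ (Fin N)), X ∈ Γ → Y ∈ Γ →
      0 < t → t < 1 →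
      prec (comp (scale t (ι X)) (scale (1 - t) (ι Y))) (ι (t • X + (1 - t) • Y))) :
    ∀ X ∈ Γ, ∀ Y ∈ Γ, Y ∈ closure {Z | Z ∈ Γ ∧ prec (ι X) (ι Z)} →
      prec (ι X) (ι Y) :=
  forward_sector_closed_general prec comp scale ι Γ hΓopen hΓconv scale_scale scale_comp hscale A1
    A2 A3 A4 A5 A6 A7
end

section
/- Under axioms A1–A7 for a simple system Γ, if the forward sector A_Y and the forward sector A_X satisfy: X ∉ A_Y, and W ∈ ∂A_Y lies on the segment from X to an interior point Z of A_Y with A_W = A_Y, then X ≺ Z. More precisely: if W = tX + (1−t)Z with t ∈ (0,1) and W ≺ Z, then X ≺ Z. -/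
/-- Cancellation law: a consequence of A1–A6. -/
lemma cancel_aux {St : Type*} (prec : St → St → Prop)
    (comp : St → St → St) (scale : ℝ → St → St)
    (comp_comm : ∀ X Y, comp X Y = comp Y X)
    (comp_assoc : ∀ X Y Z, comp (comp X Y) Z = comp X (comp Y Z))
    (scale_one : ∀ X, scale 1 X = X)
    (scale_scale : ∀ (a b : ℝ) (X : St), 0 < a → 0 < b →
      scale a (scale b X) = scale (a * b) X)
    (scale_comp : ∀ (a : ℝ) (X Y : St), 0 < a →
      scale a (comp X Y) = comp (scale a X) (scale a Y))
    (A1 : ∀ X, prec X X)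
    (A2 : ∀ X Y Z, prec X Y → prec Y Z → prec X Z)
    (A3 : ∀ X Xp Y Yp, prec X Xp → prec Y Yp → prec (comp X Y) (comp Xp Yp))
    (A4 : ∀ (l : ℝ) (X Y : St), 0 < l → prec X Y → prec (scale l X) (scale l Y))
    (A5 : ∀ (l : ℝ) (X : St), 0 < l → l < 1 →
      prec X (comp (scale (1 - l) X) (scale l X)) ∧
      prec (comp (scale (1 - l) X) (scale l X)) X)
    (A6 : ∀ (X Y Z₀ Z₁ : St) (ε : ℕ → ℝ), (∀ n, 0 < ε n) →
      Filter.Tendsto ε Filter.atTop (nhds 0) →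
      (∀ n, prec (comp X (scale (ε n) Z₀)) (comp Y (scale (ε n) Z₁))) →
      prec X Y)
    (X Y Z : St) (h : prec (comp X Z) (comp Y Z)) : prec X Y := by
  have half : (0:ℝ) < 1/2 := by norm_num
  have key : ∀ n : ℕ, prec (comp X (scale ((1/2:ℝ)^n) Z)) (comp Y (scale ((1/2:ℝ)^n) Z)) := by
    intro n
    induction n with
    | zero => simpa [scale_one] using h
    | succ n ih =>
      set ε : ℝ := (1/2:ℝ)^n with hεdef
      have hε : 0 < ε := by positivity
      have hpow : (1/2:ℝ)^(n+1) = (1/2) * ε := by rw [pow_succ]; ring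
      rw [hpow]
      have hsplitX := A5 (1/2) X half (by norm_num)
      have hsplitY := A5 (1/2) Y half (by norm_num)
      have h12 : (1:ℝ) - 1/2 = 1/2 := by norm_num
      rw [h12] at hsplitX hsplitY
      -- X ⊗ ((1/2)ε)Z ≺ ((1/2)X ⊗ (1/2)X) ⊗ ((1/2)ε)Z
      have step1 : prec (comp X (scale ((1/2)*ε) Z))
          (comp (comp (scale (1/2) X) (scale (1/2) X)) (scale ((1/2)*ε) Z)) :=
        A3 _ _ _ _ hsplitX.1 (A1 _)
      have rearr1 : comp (comp (scale (1/2) X) (scale (1/2) X)) (scale ((1/2)*ε) Z)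
          = comp (scale (1/2) X) (scale (1/2) (comp X (scale ε Z))) := by
        rw [scale_comp _ _ _ half, scale_scale _ _ _ half hε, comp_assoc]
      have step2 : prec (comp (scale (1/2) X) (scale (1/2) (comp X (scale ε Z))))
          (comp (scale (1/2) X) (scale (1/2) (comp Y (scale ε Z)))) :=
        A3 _ _ _ _ (A1 _) (A4 _ _ _ half ih)
      have rearr2 : comp (scale (1/2) X) (scale (1/2) (comp Y (scale ε Z)))
          = comp (scale (1/2) Y) (scale (1/2) (comp X (scale ε Z))) := by
        rw [scale_comp _ Y _ half, scale_comp _ X _ half, ← comp_assoc, ← comp_assoc,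
          comp_comm (scale (1/2) X) (scale (1/2) Y)]
      have step3 : prec (comp (scale (1/2) Y) (scale (1/2) (comp X (scale ε Z))))
          (comp (scale (1/2) Y) (scale (1/2) (comp Y (scale ε Z)))) :=
        A3 _ _ _ _ (A1 _) (A4 _ _ _ half ih)
      have rearr3 : comp (scale (1/2) Y) (scale (1/2) (comp Y (scale ε Z)))
          = comp (comp (scale (1/2) Y) (scale (1/2) Y)) (scale ((1/2)*ε) Z) := by
        rw [scale_comp _ _ _ half, scale_scale _ _ _ half hε, comp_assoc]
      have step4 : prec (comp (comp (scale (1/2) Y) (scale (1/2) Y)) (scale ((1/2)*ε) Z))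
          (comp Y (scale ((1/2)*ε) Z)) :=
        A3 _ _ _ _ hsplitY.2 (A1 _)
      exact A2 _ _ _ step1 (rearr1 ▸ A2 _ _ _ step2 (rearr2 ▸ A2 _ _ _ step3 (rearr3 ▸ step4)))
  exact A6 X Y Z Z (fun n => (1/2:ℝ)^n) (fun n => by positivity)
    (tendsto_pow_atTop_nhds_zero_of_lt_one (by norm_num) (by norm_num)) key

/-- Step 4 in the proof of Theorem 3 of Lieb–Yngvason: if W = tX + (1−t)Z with
t ∈ (0,1) and W ≺ Z, then X ≺ Z. -/
theorem step_four {N : ℕ}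
    {St : Type*} (prec : St → St → Prop)
    (comp : St → St → St) (scale : ℝ → St → St)
    (ι : EuclideanSpace ℝ (Fin N) → St)
    (Γ : Set (EuclideanSpace ℝ (Fin N)))
    (hΓopen : IsOpen Γ) (hΓconv : Convex ℝ Γ)
    (comp_comm : ∀ X Y, comp X Y = comp Y X)
    (comp_assoc : ∀ X Y Z, comp (comp X Y) Z = comp X (comp Y Z))
    (scale_one : ∀ X, scale 1 X = X)
    (scale_scale : ∀ (a b : ℝ) (X : St), 0 < a → 0 < b →
      scale a (scale b X) = scale (a * b) X)
    (scale_comp : ∀ (a : ℝ) (X Y : St), 0 < a →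
      scale a (comp X Y) = comp (scale a X) (scale a Y))
    -- scaling of states of the simple system is scalar multiplication in ℝ^N
    (hscale : ∀ (t : ℝ) (X : EuclideanSpace ℝ (Fin N)), 0 < t →
      scale t (ι X) = ι (t • X))
    (A1 : ∀ X, prec X X)
    (A2 : ∀ X Y Z, prec X Y → prec Y Z → prec X Z)
    (A3 : ∀ X Xp Y Yp, prec X Xp → prec Y Yp → prec (comp X Y) (comp Xp Yp))
    (A4 : ∀ (l : ℝ) (X Y : St), 0 < l → prec X Y → prec (scale l X) (scale l Y))
    (A5 : ∀ (l : ℝ) (X : St), 0 < l → l < 1 →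
      prec X (comp (scale (1 - l) X) (scale l X)) ∧
      prec (comp (scale (1 - l) X) (scale l X)) X)
    (A6 : ∀ (X Y Z₀ Z₁ : St) (ε : ℕ → ℝ), (∀ n, 0 < ε n) →
      Filter.Tendsto ε Filter.atTop (nhds 0) →
      (∀ n, prec (comp X (scale (ε n) Z₀)) (comp Y (scale (ε n) Z₁))) →
      prec X Y)
    (A7 : ∀ (t : ℝ) (X Y : EuclideanSpace ℝ (Fin N)), X ∈ Γ → Y ∈ Γ →
      0 < t → t < 1 →
      prec (comp (scale t (ι X)) (scale (1 - t) (ι Y))) (ι (t • X + (1 - t) • Y))) :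
    ∀ X Z W : EuclideanSpace ℝ (Fin N), X ∈ Γ → Z ∈ Γ → W ∈ Γ →
      ∀ t : ℝ, 0 < t → t < 1 → W = t • X + (1 - t) • Z →
      prec (ι W) (ι Z) → prec (ι X) (ι Z) := by
  intro X Z W hX hZ hW t ht ht1 hWeq hWZ
  have h1t : 0 < 1 - t := by linarith
  -- A7: (tX, (1-t)Z) ≺ W
  have h7 : prec (comp (scale t (ι X)) (scale (1 - t) (ι Z))) (ι W) := by
    rw [hWeq]; exact A7 t X Z hX hZ ht ht1
  -- A5: Z ≺ (tZ, (1-t)Z)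
  have h5 := (A5 (1 - t) (ι Z) h1t (by linarith)).1
  have hsimp : (1:ℝ) - (1 - t) = t := by ring
  rw [hsimp] at h5
  have hchain : prec (comp (scale t (ι X)) (scale (1 - t) (ι Z)))
      (comp (scale t (ι Z)) (scale (1 - t) (ι Z))) :=
    A2 _ _ _ h7 (A2 _ _ _ hWZ h5)
  have hc := cancel_aux prec comp scale comp_comm comp_assoc scale_one scale_scale
    scale_comp A1 A2 A3 A4 A5 A6 (scale t (ι X)) (scale t (ι Z)) (scale (1 - t) (ι Z)) hchain
  have ht' : 0 < (1/t : ℝ) := by positivity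
  have := A4 (1/t) _ _ ht' hc
  rw [scale_scale _ _ _ ht' ht, scale_scale _ _ _ ht' ht,
    one_div_mul_cancel (ne_of_gt ht), scale_one, scale_one] at this
  exact this
end

section
/- The thermal equilibrium relation is reflexive: X ∼_T X for every state X of a simple system, i.e., (X,X) ∼ θ(X,X). -/
/-- Lemma 2(i) of Lieb–Yngvason: the thermal equilibrium relation is reflexive,
i.e. (X,X) ∼ θ(X,X) for every state X = (U,V) of a simple system.  Here the map ι
embeds the states (U,V) of the simple system and ιΔ the states (U,V₁,V₂) of
the thermal join of the system with itself, θ(X,Y) = (U_X + U_Y, V_X, V_Y). -/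
theorem thermal_equilibrium_refl
    {St : Type*} {W : Type*} [AddCommGroup W] [Module ℝ W]
    (prec : St → St → Prop)
    (comp : St → St → St) (scale : ℝ → St → St)
    (comp_comm : ∀ X Y, comp X Y = comp Y X)
    (comp_assoc : ∀ X Y Z, comp (comp X Y) Z = comp X (comp Y Z))
    (scale_one : ∀ X, scale 1 X = X)
    (scale_scale : ∀ (a b : ℝ) (X : St), 0 < a → 0 < b →
      scale a (scale b X) = scale (a * b) X)
    (scale_comp : ∀ (a : ℝ) (X Y : St), 0 < a →
      scale a (comp X Y) = comp (scale a X) (scale a Y))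
    (A1 : ∀ X, prec X X)
    (A2 : ∀ X Y Z, prec X Y → prec Y Z → prec X Z)
    (A3 : ∀ X Xp Y Yp, prec X Xp → prec Y Yp → prec (comp X Y) (comp Xp Yp))
    (A4 : ∀ (l : ℝ) (X Y : St), 0 < l → prec X Y → prec (scale l X) (scale l Y))
    (A5 : ∀ (l : ℝ) (X : St), 0 < l → l < 1 →
      prec X (comp (scale (1 - l) X) (scale l X)) ∧
      prec (comp (scale (1 - l) X) (scale l X)) X)
    (A6 : ∀ (X Y Z₀ Z₁ : St) (ε : ℕ → ℝ), (∀ n, 0 < ε n) →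
      Filter.Tendsto ε Filter.atTop (nhds 0) →
      (∀ n, prec (comp X (scale (ε n) Z₀)) (comp Y (scale (ε n) Z₁))) →
      prec X Y)
    (ι : ℝ × W → St) (ιΔ : ℝ × W × W → St)
    -- scaling of simple-system states is scalar multiplication
    (hscale : ∀ (t : ℝ) (X : ℝ × W), 0 < t → scale t (ι X) = ι (t • X))
    -- A7 convex combination for the simple system
    (A7 : ∀ (t : ℝ) (X Y : ℝ × W), 0 < t → t < 1 →
      prec (comp (scale t (ι X)) (scale (1 - t) (ι Y))) (ι (t • X + (1 - t) • Y)))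
    -- A11 thermal join
    (A11 : ∀ X Y : ℝ × W,
      prec (comp (ι X) (ι Y)) (ιΔ (X.1 + Y.1, X.2, Y.2)))
    -- A12 thermal splitting
    (A12 : ∀ (U : ℝ) (V₁ V₂ : W), ∃ U₁ U₂ : ℝ, U₁ + U₂ = U ∧
      prec (ιΔ (U, V₁, V₂)) (comp (ι (U₁, V₁)) (ι (U₂, V₂))) ∧
      prec (comp (ι (U₁, V₁)) (ι (U₂, V₂))) (ιΔ (U, V₁, V₂))) :
    ∀ X : ℝ × W,
      prec (comp (ι X) (ι X)) (ιΔ (X.1 + X.1, X.2, X.2)) ∧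
      prec (ιΔ (X.1 + X.1, X.2, X.2)) (comp (ι X) (ι X)) := by
  intro X
  refine ⟨A11 X X, ?_⟩
  obtain ⟨U₁, U₂, hsum, h1, h2⟩ := A12 (X.1 + X.1) X.2 X.2
  set A := ι (U₁, X.2) with hA
  set B := ι (U₂, X.2) with hB
  have half : (1:ℝ) - 1/2 = 1/2 := by norm_num
  have hA5A := (A5 (1/2) A (by norm_num) (by norm_num)).1
  have hA5B := (A5 (1/2) B (by norm_num) (by norm_num)).1
  rw [half] at hA5A hA5B
  have hsplit : prec (comp A B)
      (comp (comp (scale (1/2) A) (scale (1/2) A))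
            (comp (scale (1/2) B) (scale (1/2) B))) := A3 _ _ _ _ hA5A hA5B
  have key : comp (comp (scale (1/2) A) (scale (1/2) A))
      (comp (scale (1/2) B) (scale (1/2) B)) =
      comp (comp (scale (1/2) A) (scale (1/2) B))
           (comp (scale (1/2) A) (scale (1/2) B)) := by
    rw [comp_assoc, ← comp_assoc (scale (1/2) A) (scale (1/2) B),
      comp_comm (comp (scale (1/2) A) (scale (1/2) B)) (scale (1/2) B),
      ← comp_assoc]
  rw [key] at hsplit
  have hpt : ((1:ℝ)/2) • ((U₁, X.2) : ℝ × W) + ((1:ℝ)/2) • ((U₂, X.2) : ℝ × W) = X := by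
    have h2' : ((1:ℝ)/2) * U₁ + ((1:ℝ)/2) * U₂ = X.1 := by
      have := hsum; linarith
    have hw : ((1:ℝ)/2) • X.2 + ((1:ℝ)/2) • X.2 = X.2 := by
      rw [← add_smul]; norm_num
    ext
    · simpa using h2'
    · simpa using hw
  have hA7 := A7 (1/2) (U₁, X.2) (U₂, X.2) (by norm_num) (by norm_num)
  rw [half, hpt] at hA7
  have hfin : prec (comp A B) (comp (ι X) (ι X)) :=
    A2 _ _ _ hsplit (A3 _ _ _ _ hA7 hA7)
  exact A2 _ _ _ h1 hfin
end

section
/- If X ∼_T Y then λX ∼_T μY for all λ, μ > 0. -/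
/-!
Rescaling either side of a thermal equilibrium can be absorbed by the zeroth law once one
knows that `a • Z ∼_T b • Z` for all `a, b > 0`: `l • X ∼_T X ∼_T Y ∼_T m • Y`.
For the latter, split the energy of `θ(a • Z, b • Z)` between the two subsystems by the thermal
join axiom, merge the two pieces back into the single state `(a + b) • Z` by convex
combination, and cut that state into `a • Z` and `b • Z` again by the splitting axiom.
-/

section ThermalEquilibrium

variable {St W : Type*}

/-- The paper's `X ∼_T Y`. -/
def ThermalEquilibrium (prec : St → St → Prop) (comp : St → St → St) (ι : ℝ × W → St)
    (ιΔ : ℝ × W × W → St) (X Y : ℝ × W) : Prop :=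
  prec (comp (ι X) (ι Y)) (ιΔ (X.1 + Y.1, X.2, Y.2)) ∧
    prec (ιΔ (X.1 + Y.1, X.2, Y.2)) (comp (ι X) (ι Y))

variable [AddCommGroup W] [Module ℝ W] {prec : St → St → Prop} {comp : St → St → St}
  {scale : ℝ → St → St} {ι : ℝ × W → St} {ιΔ : ℝ × W × W → St}

theorem prec_comp_add
    (hscale : ∀ (t : ℝ) (X : ℝ × W), 0 < t → scale t (ι X) = ι (t • X))
    (A7 : ∀ (t : ℝ) (X Y : ℝ × W), 0 < t → t < 1 →
      prec (comp (scale t (ι X)) (scale (1 - t) (ι Y))) (ι (t • X + (1 - t) • Y)))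
    (X Y : ℝ × W) : prec (comp (ι X) (ι Y)) (ι (X + Y)) := by
  have h := A7 (1 / 2) ((2 : ℝ) • X) ((2 : ℝ) • Y) (by norm_num) (by norm_num)
  rwa [hscale _ _ (by norm_num), hscale _ _ (by norm_num), smul_smul, smul_smul,
    show (1 : ℝ) - 1 / 2 = 1 / 2 by norm_num, show (1 / 2 : ℝ) * 2 = 1 by norm_num,
    one_smul, one_smul] at h

theorem prec_add_smul_comp
    (hscale : ∀ (t : ℝ) (X : ℝ × W), 0 < t → scale t (ι X) = ι (t • X))
    (A5 : ∀ (l : ℝ) (X : St), 0 < l → l < 1 →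
      prec X (comp (scale (1 - l) X) (scale l X)) ∧
      prec (comp (scale (1 - l) X) (scale l X)) X)
    (Z : ℝ × W) {a b : ℝ} (ha : 0 < a) (hb : 0 < b) :
    prec (ι ((a + b) • Z)) (comp (ι (a • Z)) (ι (b • Z))) := by
  have hab : 0 < a + b := add_pos ha hb
  have hl : 0 < b / (a + b) := div_pos hb hab
  have hl' : b / (a + b) < 1 := (div_lt_one hab).2 (lt_add_of_pos_left b ha)
  have h := (A5 (b / (a + b)) (ι ((a + b) • Z)) hl hl').1
  rwa [hscale _ _ (sub_pos.2 hl'), hscale _ _ hl, smul_smul, smul_smul,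
    show (1 - b / (a + b)) * (a + b) = a by field_simp; ring,
    show b / (a + b) * (a + b) = b by field_simp] at h

theorem thermalEquilibrium_smul_smul
    (A2 : ∀ X Y Z, prec X Y → prec Y Z → prec X Z)
    (A5 : ∀ (l : ℝ) (X : St), 0 < l → l < 1 →
      prec X (comp (scale (1 - l) X) (scale l X)) ∧
      prec (comp (scale (1 - l) X) (scale l X)) X)
    (hscale : ∀ (t : ℝ) (X : ℝ × W), 0 < t → scale t (ι X) = ι (t • X))
    (A7 : ∀ (t : ℝ) (X Y : ℝ × W), 0 < t → t < 1 →
      prec (comp (scale t (ι X)) (scale (1 - t) (ι Y))) (ι (t • X + (1 - t) • Y)))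
    (A11 : ∀ X Y : ℝ × W, prec (comp (ι X) (ι Y)) (ιΔ (X.1 + Y.1, X.2, Y.2)))
    (A12 : ∀ (U : ℝ) (V₁ V₂ : W), ∃ U₁ U₂ : ℝ, U₁ + U₂ = U ∧
      prec (ιΔ (U, V₁, V₂)) (comp (ι (U₁, V₁)) (ι (U₂, V₂))) ∧
      prec (comp (ι (U₁, V₁)) (ι (U₂, V₂))) (ιΔ (U, V₁, V₂)))
    (Z : ℝ × W) {a b : ℝ} (ha : 0 < a) (hb : 0 < b) :
    ThermalEquilibrium prec comp ι ιΔ (a • Z) (b • Z) := by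
  refine ⟨A11 _ _, ?_⟩
  obtain ⟨U₁, U₂, hU, hsplit, -⟩ := A12 ((a • Z).1 + (b • Z).1) (a • Z).2 (b • Z).2
  have hmerge : ((U₁, (a • Z).2) + (U₂, (b • Z).2) : ℝ × W) = (a + b) • Z := by
    ext
    · simpa [add_mul] using hU
    · simp [add_smul]
  refine A2 _ _ _ hsplit (A2 _ _ _ ?_ (prec_add_smul_comp hscale A5 Z ha hb))
  simpa only [hmerge] using prec_comp_add hscale A7 (U₁, (a • Z).2) (U₂, (b • Z).2)

end ThermalEquilibrium

theorem thermal_equilibrium_scaling_general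
    {St : Type*} {W : Type*} [AddCommGroup W] [Module ℝ W]
    (prec : St → St → Prop)
    (comp : St → St → St) (scale : ℝ → St → St)
    (A2 : ∀ X Y Z, prec X Y → prec Y Z → prec X Z)
    (A5 : ∀ (l : ℝ) (X : St), 0 < l → l < 1 →
      prec X (comp (scale (1 - l) X) (scale l X)) ∧
      prec (comp (scale (1 - l) X) (scale l X)) X)
    (ι : ℝ × W → St) (ιΔ : ℝ × W × W → St)
    (hscale : ∀ (t : ℝ) (X : ℝ × W), 0 < t → scale t (ι X) = ι (t • X))
    (A7 : ∀ (t : ℝ) (X Y : ℝ × W), 0 < t → t < 1 →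
      prec (comp (scale t (ι X)) (scale (1 - t) (ι Y))) (ι (t • X + (1 - t) • Y)))
    (A11 : ∀ X Y : ℝ × W,
      prec (comp (ι X) (ι Y)) (ιΔ (X.1 + Y.1, X.2, Y.2)))
    (A12 : ∀ (U : ℝ) (V₁ V₂ : W), ∃ U₁ U₂ : ℝ, U₁ + U₂ = U ∧
      prec (ιΔ (U, V₁, V₂)) (comp (ι (U₁, V₁)) (ι (U₂, V₂))) ∧
      prec (comp (ι (U₁, V₁)) (ι (U₂, V₂))) (ιΔ (U, V₁, V₂)))
    -- A13, the zeroth law: thermal equilibrium is transitive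
    (A13 : ∀ X Z Y : ℝ × W,
      (prec (comp (ι X) (ι Z)) (ιΔ (X.1 + Z.1, X.2, Z.2)) ∧
       prec (ιΔ (X.1 + Z.1, X.2, Z.2)) (comp (ι X) (ι Z))) →
      (prec (comp (ι Z) (ι Y)) (ιΔ (Z.1 + Y.1, Z.2, Y.2)) ∧
       prec (ιΔ (Z.1 + Y.1, Z.2, Y.2)) (comp (ι Z) (ι Y))) →
      (prec (comp (ι X) (ι Y)) (ιΔ (X.1 + Y.1, X.2, Y.2)) ∧
       prec (ιΔ (X.1 + Y.1, X.2, Y.2)) (comp (ι X) (ι Y)))) :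
    ∀ (X Y : ℝ × W) (l m : ℝ), 0 < l → 0 < m →
      (prec (comp (ι X) (ι Y)) (ιΔ (X.1 + Y.1, X.2, Y.2)) ∧
       prec (ιΔ (X.1 + Y.1, X.2, Y.2)) (comp (ι X) (ι Y))) →
      (prec (comp (ι (l • X)) (ι (m • Y)))
         (ιΔ ((l • X).1 + (m • Y).1, (l • X).2, (m • Y).2)) ∧
       prec (ιΔ ((l • X).1 + (m • Y).1, (l • X).2, (m • Y).2))
         (comp (ι (l • X)) (ι (m • Y)))) := by
  intro X Y l m hl hm hXY
  have hsmul : ∀ (Z : ℝ × W) {a b : ℝ}, 0 < a → 0 < b →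
      ThermalEquilibrium prec comp ι ιΔ (a • Z) (b • Z) :=
    thermalEquilibrium_smul_smul A2 A5 hscale A7 A11 A12
  have hlX : ThermalEquilibrium prec comp ι ιΔ (l • X) X := by
    simpa only [one_smul] using hsmul X hl one_pos
  have hYm : ThermalEquilibrium prec comp ι ιΔ Y (m • Y) := by
    simpa only [one_smul] using hsmul Y one_pos hm
  exact A13 _ _ _ hlX (A13 _ _ _ hXY hYm)

/-- Lemma 3(i) of Lieb–Yngvason: if X ∼_T Y then λX ∼_T μY for all λ, μ > 0.
Here X ∼_T Y means (X,Y) ∼ θ(X,Y) with θ(X,Y) = (U_X + U_Y, V_X, V_Y), and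
λ(U,V) = (λU, λV). -/
theorem thermal_equilibrium_scaling
    {St : Type*} {W : Type*} [AddCommGroup W] [Module ℝ W]
    (prec : St → St → Prop)
    (comp : St → St → St) (scale : ℝ → St → St)
    (comp_comm : ∀ X Y, comp X Y = comp Y X)
    (comp_assoc : ∀ X Y Z, comp (comp X Y) Z = comp X (comp Y Z))
    (scale_one : ∀ X, scale 1 X = X)
    (scale_scale : ∀ (a b : ℝ) (X : St), 0 < a → 0 < b →
      scale a (scale b X) = scale (a * b) X)
    (scale_comp : ∀ (a : ℝ) (X Y : St), 0 < a →
      scale a (comp X Y) = comp (scale a X) (scale a Y))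
    (A1 : ∀ X, prec X X)
    (A2 : ∀ X Y Z, prec X Y → prec Y Z → prec X Z)
    (A3 : ∀ X Xp Y Yp, prec X Xp → prec Y Yp → prec (comp X Y) (comp Xp Yp))
    (A4 : ∀ (l : ℝ) (X Y : St), 0 < l → prec X Y → prec (scale l X) (scale l Y))
    (A5 : ∀ (l : ℝ) (X : St), 0 < l → l < 1 →
      prec X (comp (scale (1 - l) X) (scale l X)) ∧
      prec (comp (scale (1 - l) X) (scale l X)) X)
    (A6 : ∀ (X Y Z₀ Z₁ : St) (ε : ℕ → ℝ), (∀ n, 0 < ε n) →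
      Filter.Tendsto ε Filter.atTop (nhds 0) →
      (∀ n, prec (comp X (scale (ε n) Z₀)) (comp Y (scale (ε n) Z₁))) →
      prec X Y)
    (ι : ℝ × W → St) (ιΔ : ℝ × W × W → St)
    (hscale : ∀ (t : ℝ) (X : ℝ × W), 0 < t → scale t (ι X) = ι (t • X))
    (A7 : ∀ (t : ℝ) (X Y : ℝ × W), 0 < t → t < 1 →
      prec (comp (scale t (ι X)) (scale (1 - t) (ι Y))) (ι (t • X + (1 - t) • Y)))
    (A11 : ∀ X Y : ℝ × W,
      prec (comp (ι X) (ι Y)) (ιΔ (X.1 + Y.1, X.2, Y.2)))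
    (A12 : ∀ (U : ℝ) (V₁ V₂ : W), ∃ U₁ U₂ : ℝ, U₁ + U₂ = U ∧
      prec (ιΔ (U, V₁, V₂)) (comp (ι (U₁, V₁)) (ι (U₂, V₂))) ∧
      prec (comp (ι (U₁, V₁)) (ι (U₂, V₂))) (ιΔ (U, V₁, V₂)))
    -- A13, the zeroth law: thermal equilibrium is transitive
    (A13 : ∀ X Z Y : ℝ × W,
      (prec (comp (ι X) (ι Z)) (ιΔ (X.1 + Z.1, X.2, Z.2)) ∧
       prec (ιΔ (X.1 + Z.1, X.2, Z.2)) (comp (ι X) (ι Z))) →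
      (prec (comp (ι Z) (ι Y)) (ιΔ (Z.1 + Y.1, Z.2, Y.2)) ∧
       prec (ιΔ (Z.1 + Y.1, Z.2, Y.2)) (comp (ι Z) (ι Y))) →
      (prec (comp (ι X) (ι Y)) (ιΔ (X.1 + Y.1, X.2, Y.2)) ∧
       prec (ιΔ (X.1 + Y.1, X.2, Y.2)) (comp (ι X) (ι Y)))) :
    ∀ (X Y : ℝ × W) (l m : ℝ), 0 < l → 0 < m →
      (prec (comp (ι X) (ι Y)) (ιΔ (X.1 + Y.1, X.2, Y.2)) ∧
       prec (ιΔ (X.1 + Y.1, X.2, Y.2)) (comp (ι X) (ι Y))) →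
      (prec (comp (ι (l • X)) (ι (m • Y)))
         (ιΔ ((l • X).1 + (m • Y).1, (l • X).2, (m • Y).2)) ∧
       prec (ιΔ ((l • X).1 + (m • Y).1, (l • X).2, (m • Y).2))
         (comp (ι (l • X)) (ι (m • Y)))) :=
  thermal_equilibrium_scaling_general prec comp scale A2 A5 ι ιΔ hscale A7 A11 A12 A13
end

section
/- If X ∼_T Y and Z ∼_T X, then Z ∼_T θ(X,Y); in particular X ∼_T θ(X,Y). -/
/-- Lemma 3(ii) of Lieb–Yngvason: if X ∼_T Y and Z ∼_T X then Z ∼_T θ(X,Y);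
in particular X ∼_T θ(X,Y).  Simple-system states are (U,V) ∈ ℝ × W, the
thermal join θ(X,Y) = (U_X + U_Y, V_X, V_Y) is embedded by ιΔ, and the thermal
join of the system with the join system Δ is embedded by ιΔ₂. -/
theorem thermal_equilibrium_join
    {St : Type*} {W : Type*} [AddCommGroup W] [Module ℝ W]
    (prec : St → St → Prop)
    (comp : St → St → St) (scale : ℝ → St → St)
    (comp_comm : ∀ X Y, comp X Y = comp Y X)
    (comp_assoc : ∀ X Y Z, comp (comp X Y) Z = comp X (comp Y Z))
    (scale_one : ∀ X, scale 1 X = X)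
    (scale_scale : ∀ (a b : ℝ) (X : St), 0 < a → 0 < b →
      scale a (scale b X) = scale (a * b) X)
    (scale_comp : ∀ (a : ℝ) (X Y : St), 0 < a →
      scale a (comp X Y) = comp (scale a X) (scale a Y))
    (A1 : ∀ X, prec X X)
    (A2 : ∀ X Y Z, prec X Y → prec Y Z → prec X Z)
    (A3 : ∀ X Xp Y Yp, prec X Xp → prec Y Yp → prec (comp X Y) (comp Xp Yp))
    (A4 : ∀ (l : ℝ) (X Y : St), 0 < l → prec X Y → prec (scale l X) (scale l Y))
    (A5 : ∀ (l : ℝ) (X : St), 0 < l → l < 1 →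
      prec X (comp (scale (1 - l) X) (scale l X)) ∧
      prec (comp (scale (1 - l) X) (scale l X)) X)
    (A6 : ∀ (X Y Z₀ Z₁ : St) (ε : ℕ → ℝ), (∀ n, 0 < ε n) →
      Filter.Tendsto ε Filter.atTop (nhds 0) →
      (∀ n, prec (comp X (scale (ε n) Z₀)) (comp Y (scale (ε n) Z₁))) →
      prec X Y)
    (ι : ℝ × W → St) (ιΔ : ℝ × W × W → St) (ιΔ₂ : ℝ × W × (W × W) → St)
    (hscale : ∀ (t : ℝ) (X : ℝ × W), 0 < t → scale t (ι X) = ι (t • X))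
    (A7 : ∀ (t : ℝ) (X Y : ℝ × W), 0 < t → t < 1 →
      prec (comp (scale t (ι X)) (scale (1 - t) (ι Y))) (ι (t • X + (1 - t) • Y)))
    (A11 : ∀ X Y : ℝ × W,
      prec (comp (ι X) (ι Y)) (ιΔ (X.1 + Y.1, X.2, Y.2)))
    (A11' : ∀ (Z : ℝ × W) (P : ℝ × (W × W)),
      prec (comp (ι Z) (ιΔ P)) (ιΔ₂ (Z.1 + P.1, Z.2, P.2)))
    (A12 : ∀ (U : ℝ) (V₁ V₂ : W), ∃ U₁ U₂ : ℝ, U₁ + U₂ = U ∧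
      prec (ιΔ (U, V₁, V₂)) (comp (ι (U₁, V₁)) (ι (U₂, V₂))) ∧
      prec (comp (ι (U₁, V₁)) (ι (U₂, V₂))) (ιΔ (U, V₁, V₂)))
    (A12' : ∀ (U : ℝ) (V : W) (P : W × W), ∃ U₁ U₂ : ℝ, U₁ + U₂ = U ∧
      prec (ιΔ₂ (U, V, P)) (comp (ι (U₁, V)) (ιΔ (U₂, P))) ∧
      prec (comp (ι (U₁, V)) (ιΔ (U₂, P))) (ιΔ₂ (U, V, P)))
    -- A13, the zeroth law, for pairs of simple-system states
    (A13 : ∀ X Z Y : ℝ × W,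
      (prec (comp (ι X) (ι Z)) (ιΔ (X.1 + Z.1, X.2, Z.2)) ∧
       prec (ιΔ (X.1 + Z.1, X.2, Z.2)) (comp (ι X) (ι Z))) →
      (prec (comp (ι Z) (ι Y)) (ιΔ (Z.1 + Y.1, Z.2, Y.2)) ∧
       prec (ιΔ (Z.1 + Y.1, Z.2, Y.2)) (comp (ι Z) (ι Y))) →
      (prec (comp (ι X) (ι Y)) (ιΔ (X.1 + Y.1, X.2, Y.2)) ∧
       prec (ιΔ (X.1 + Y.1, X.2, Y.2)) (comp (ι X) (ι Y))))
    -- A13, the zeroth law, between a simple-system state and a state of the join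
    (A13' : ∀ (Z X : ℝ × W) (P : ℝ × (W × W)),
      (prec (comp (ι Z) (ι X)) (ιΔ (Z.1 + X.1, Z.2, X.2)) ∧
       prec (ιΔ (Z.1 + X.1, Z.2, X.2)) (comp (ι Z) (ι X))) →
      (prec (comp (ι X) (ιΔ P)) (ιΔ₂ (X.1 + P.1, X.2, P.2)) ∧
       prec (ιΔ₂ (X.1 + P.1, X.2, P.2)) (comp (ι X) (ιΔ P))) →
      (prec (comp (ι Z) (ιΔ P)) (ιΔ₂ (Z.1 + P.1, Z.2, P.2)) ∧
       prec (ιΔ₂ (Z.1 + P.1, Z.2, P.2)) (comp (ι Z) (ιΔ P)))) :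
    ∀ X Y Z : ℝ × W,
      (prec (comp (ι X) (ι Y)) (ιΔ (X.1 + Y.1, X.2, Y.2)) ∧
       prec (ιΔ (X.1 + Y.1, X.2, Y.2)) (comp (ι X) (ι Y))) →
      (prec (comp (ι Z) (ι X)) (ιΔ (Z.1 + X.1, Z.2, X.2)) ∧
       prec (ιΔ (Z.1 + X.1, Z.2, X.2)) (comp (ι Z) (ι X))) →
      ((prec (comp (ι Z) (ιΔ (X.1 + Y.1, X.2, Y.2)))
          (ιΔ₂ (Z.1 + (X.1 + Y.1), Z.2, (X.2, Y.2))) ∧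
        prec (ιΔ₂ (Z.1 + (X.1 + Y.1), Z.2, (X.2, Y.2)))
          (comp (ι Z) (ιΔ (X.1 + Y.1, X.2, Y.2)))) ∧
       (prec (comp (ι X) (ιΔ (X.1 + Y.1, X.2, Y.2)))
          (ιΔ₂ (X.1 + (X.1 + Y.1), X.2, (X.2, Y.2))) ∧
        prec (ιΔ₂ (X.1 + (X.1 + Y.1), X.2, (X.2, Y.2)))
          (comp (ι X) (ιΔ (X.1 + Y.1, X.2, Y.2))))) := by
  intro X Y Z hXY hZX
  -- Cancellation law, derived from A1-A6
  have cancel : ∀ A B C : St, prec (comp A C) (comp B C) → prec A B := by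
    intro A B C h
    have key : ∀ n : ℕ, prec (comp A (scale ((1/2:ℝ)^n) C)) (comp B (scale ((1/2:ℝ)^n) C)) := by
      intro n
      induction n with
      | zero => simpa [scale_one] using h
      | succ n ih =>
        have hp : (0:ℝ) < (1/2:ℝ)^n := by positivity
        have h2 := A4 (1/2) _ _ (by norm_num) ih
        rw [scale_comp (1/2) A (scale ((1/2:ℝ)^n) C) (by norm_num),
            scale_comp (1/2) B (scale ((1/2:ℝ)^n) C) (by norm_num),
            scale_scale (1/2) ((1/2:ℝ)^n) C (by norm_num) hp,
            show (1/2:ℝ) * (1/2)^n = (1/2)^(n+1) by ring] at h2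
        have hA5 := A5 (1/2) A (by norm_num) (by norm_num)
        have hB5 := A5 (1/2) B (by norm_num) (by norm_num)
        rw [show (1 - 1/2 : ℝ) = 1/2 by norm_num] at hA5 hB5
        set A' := scale (1/2) A with hA'
        set B' := scale (1/2) B with hB'
        set C' := scale ((1/2:ℝ)^(n+1)) C with hC'
        have s1 : prec (comp A C') (comp (comp A' A') C') := A3 _ _ _ _ hA5.1 (A1 _)
        have s2 : prec (comp (comp A' A') C') (comp (comp A' B') C') := by
          rw [comp_assoc A' A' C', comp_assoc A' B' C']
          exact A3 _ _ _ _ (A1 _) h2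
        have s3 : prec (comp (comp A' B') C') (comp (comp B' B') C') := by
          rw [comp_comm A' B', comp_assoc B' A' C', comp_assoc B' B' C']
          exact A3 _ _ _ _ (A1 _) h2
        have s4 : prec (comp (comp B' B') C') (comp B C') := A3 _ _ _ _ hB5.2 (A1 _)
        exact A2 _ _ _ (A2 _ _ _ s1 s2) (A2 _ _ _ s3 s4)
    refine A6 A B C C (fun n => (1/2:ℝ)^n) (fun n => by positivity) ?_ key
    exact tendsto_pow_atTop_nhds_zero_of_lt_one (by norm_num) (by norm_num)
  -- Averaging lemma from A5 and A7
  have avg : ∀ (p q : ℝ) (V : W),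
      prec (comp (ι (p,V)) (ι (q,V))) (comp (ι ((p+q)/2,V)) (ι ((p+q)/2,V))) := by
    intro p q V
    have h5 := A5 (1/2) (comp (ι (p,V)) (ι (q,V))) (by norm_num) (by norm_num)
    rw [show (1 - 1/2 : ℝ) = 1/2 by norm_num] at h5
    have h7 := A7 (1/2) (p,V) (q,V) (by norm_num) (by norm_num)
    rw [show (1 - 1/2 : ℝ) = 1/2 by norm_num] at h7
    have hpt : ((1/2:ℝ) • ((p,V) : ℝ × W) + (1/2:ℝ) • ((q,V) : ℝ × W)) = (((p+q)/2 : ℝ), V) := by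
      apply Prod.ext
      · simp [smul_eq_mul]; ring
      · show (1/2:ℝ) • V + (1/2:ℝ) • V = V
        rw [← add_smul]; norm_num
    rw [hpt] at h7
    have hsc : scale (1/2) (comp (ι (p,V)) (ι (q,V)))
        = comp (scale (1/2) (ι (p,V))) (scale (1/2) (ι (q,V))) :=
      scale_comp _ _ _ (by norm_num)
    have step : prec (comp (scale (1/2) (comp (ι (p,V)) (ι (q,V))))
                        (scale (1/2) (comp (ι (p,V)) (ι (q,V)))))
                     (comp (ι ((p+q)/2,V)) (ι ((p+q)/2,V))) := by
      rw [hsc]; exact A3 _ _ _ _ h7 h7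
    exact A2 _ _ _ h5.1 step
  -- any (X.2,Y.2)-pair with total energy X.1+Y.1 precedes (X,Y)
  have pair_to_XY : ∀ (mm ee : ℝ), mm + ee = X.1 + Y.1 →
      prec (comp (ι (mm, X.2)) (ι (ee, Y.2))) (comp (ι X) (ι Y)) := by
    intro mm ee hsum
    have h11 : prec (comp (ι (mm, X.2)) (ι (ee, Y.2))) (ιΔ (mm + ee, X.2, Y.2)) :=
      A11 (mm, X.2) (ee, Y.2)
    rw [hsum] at h11
    exact A2 _ _ _ h11 hXY.2
  -- X ∼_T θ(X,Y), forward direction : A11'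
  have fwd2 : prec (comp (ι X) (ιΔ (X.1 + Y.1, X.2, Y.2)))
      (ιΔ₂ (X.1 + (X.1 + Y.1), X.2, (X.2, Y.2))) := A11' X (X.1 + Y.1, (X.2, Y.2))
  -- X ∼_T θ(X,Y), backward direction
  have bwd2 : prec (ιΔ₂ (X.1 + (X.1 + Y.1), X.2, (X.2, Y.2)))
      (comp (ι X) (ιΔ (X.1 + Y.1, X.2, Y.2))) := by
    obtain ⟨U₁, U₂, hU, hs1, hs2⟩ := A12' (X.1 + (X.1 + Y.1)) X.2 (X.2, Y.2)
    obtain ⟨a, b, hab, ht1, ht2⟩ := A12 U₂ X.2 Y.2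
    apply cancel _ _ (ι Y)
    have e1 : prec (comp (ιΔ₂ (X.1 + (X.1 + Y.1), X.2, (X.2, Y.2))) (ι Y))
        (comp (comp (ι (U₁, X.2)) (comp (ι (a, X.2)) (ι (b, Y.2)))) (ι Y)) :=
      A3 _ _ _ _ (A2 _ _ _ hs1 (A3 _ _ _ _ (A1 _) ht1)) (A1 _)
    have e2eq : comp (comp (ι (U₁, X.2)) (comp (ι (a, X.2)) (ι (b, Y.2)))) (ι Y)
        = comp (comp (ι (U₁, X.2)) (ι (a, X.2))) (comp (ι (b, Y.2)) (ι Y)) := by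
      rw [comp_assoc (ι (U₁, X.2)) (comp (ι (a, X.2)) (ι (b, Y.2))) (ι Y),
          comp_assoc (ι (a, X.2)) (ι (b, Y.2)) (ι Y),
          ← comp_assoc (ι (U₁, X.2)) (ι (a, X.2)) (comp (ι (b, Y.2)) (ι Y))]
    rw [e2eq] at e1
    have hm := avg U₁ a X.2
    have he : prec (comp (ι (b, Y.2)) (ι Y))
        (comp (ι ((b + Y.1)/2, Y.2)) (ι ((b + Y.1)/2, Y.2))) := avg b Y.1 Y.2
    have e3 := A3 _ _ _ _ hm he
    have e4eq : comp (comp (ι ((U₁+a)/2, X.2)) (ι ((U₁+a)/2, X.2)))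
          (comp (ι ((b+Y.1)/2, Y.2)) (ι ((b+Y.1)/2, Y.2)))
        = comp (comp (ι ((U₁+a)/2, X.2)) (ι ((b+Y.1)/2, Y.2)))
          (comp (ι ((U₁+a)/2, X.2)) (ι ((b+Y.1)/2, Y.2))) := by
      rw [comp_assoc (ι ((U₁+a)/2, X.2)) (ι ((U₁+a)/2, X.2))
            (comp (ι ((b+Y.1)/2, Y.2)) (ι ((b+Y.1)/2, Y.2))),
          ← comp_assoc (ι ((U₁+a)/2, X.2)) (ι ((b+Y.1)/2, Y.2)) (ι ((b+Y.1)/2, Y.2)),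
          comp_comm (ι ((U₁+a)/2, X.2)) (ι ((b+Y.1)/2, Y.2)),
          comp_assoc (ι ((b+Y.1)/2, Y.2)) (ι ((U₁+a)/2, X.2)) (ι ((b+Y.1)/2, Y.2)),
          ← comp_assoc (ι ((U₁+a)/2, X.2)) (ι ((b+Y.1)/2, Y.2))
            (comp (ι ((U₁+a)/2, X.2)) (ι ((b+Y.1)/2, Y.2))),
          comp_comm (ι ((b+Y.1)/2, Y.2)) (ι ((U₁+a)/2, X.2))]
    rw [e4eq] at e3
    have hsum : (U₁+a)/2 + (b+Y.1)/2 = X.1 + Y.1 := by linarith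
    have hpair := pair_to_XY ((U₁+a)/2) ((b+Y.1)/2) hsum
    have e5 := A3 _ _ _ _ hpair hpair
    have e6eq : comp (comp (ι X) (ι Y)) (comp (ι X) (ι Y))
        = comp (comp (ι X) (comp (ι X) (ι Y))) (ι Y) := by
      rw [comp_assoc (ι X) (ι Y) (comp (ι X) (ι Y)),
          ← comp_assoc (ι Y) (ι X) (ι Y),
          comp_comm (ι Y) (ι X),
          comp_assoc (ι X) (comp (ι X) (ι Y)) (ι Y)]
    rw [e6eq] at e5
    have e7 : prec (comp (comp (ι X) (comp (ι X) (ι Y))) (ι Y))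
        (comp (comp (ι X) (ιΔ (X.1 + Y.1, X.2, Y.2))) (ι Y)) :=
      A3 _ _ _ _ (A3 _ _ _ _ (A1 _) hXY.1) (A1 _)
    exact A2 _ _ _ (A2 _ _ _ (A2 _ _ _ e1 e3) e5) e7
  refine ⟨?_, fwd2, bwd2⟩
  exact A13' Z X (X.1 + Y.1, (X.2, Y.2)) hZX ⟨fwd2, bwd2⟩
end

section
/- If CH holds for all compound systems and each system Γ has an entropy function S_Γ in the sense of Theorem 1, then there exist constants a_Γ > 0 and B(Γ) such that S(X) := a_Γ S_Γ(X) + B(Γ) is additive (S(X,Y) = S(X) + S(Y)), extensive (S(λX) = λS(X)), and monotone: for X, Y in the same state space, X ≺ Y if and only if S(X) ≤ S(Y). -/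
/- Compound states of arbitrary (scaled) systems are modelled as lists of pairs
`(λ, X)` where `λ > 0` and `X` is a state of one of the systems `Γ i`. -/

/-- Scaling of a compound state. -/
def scaleL {α : Type*} (t : ℝ) (X : List (ℝ × α)) : List (ℝ × α) :=
  X.map (fun p => (t * p.1, p.2))

/-- All scaling coefficients are positive. -/
def posL {α : Type*} (X : List (ℝ × α)) : Prop := ∀ p ∈ X, 0 < p.1

/-- Total mass. -/
def massL {α : Type*} (X : List (ℝ × α)) : ℝ := (X.map Prod.fst).sum

/-- The total entropy `Σ λᵢ S(Xᵢ)`. -/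
def entL {α : Type*} (S : α → ℝ) (X : List (ℝ × α)) : ℝ :=
  (X.map (fun p => p.1 * S p.2)).sum

/-- A compound state of scaled copies of the single system `Γ i`, viewed as a
compound state of the whole collection. -/
def liftL {ι : Type*} {Γ : ι → Type*} (i : ι) (X : List (ℝ × Γ i)) :
    List (ℝ × Σ j, Γ j) :=
  X.map (fun p => (p.1, ⟨i, p.2⟩))

/-- Two compound states belong to the same state space: same scaled copies of
the same systems (up to order). -/
def SameSpace {ι : Type*} {Γ : ι → Type*} (X Y : List (ℝ × Σ j, Γ j)) : Prop :=
  (X.map (fun p => (p.1, p.2.1))).Perm (Y.map (fun p => (p.1, p.2.1)))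

/-- `S` is an entropy function for the system `Γ i` in the sense of Theorem 1. -/
def IsEntropyFor {ι : Type*} {Γ : ι → Type*}
    (prec : List (ℝ × Σ j, Γ j) → List (ℝ × Σ j, Γ j) → Prop)
    (i : ι) (S : Γ i → ℝ) : Prop :=
  ∀ X Y : List (ℝ × Γ i), X ≠ [] → Y ≠ [] → posL X → posL Y →
    massL X = massL Y →
    (prec (liftL i X) (liftL i Y) ↔ entL S X ≤ entL S Y)

/-!
Fix a reference system with two states `w₀`, `w₁` of different entropy. For any system with
states `x₀`, `x₁` of different entropy, comparison and stability produce a threshold `r > 0` with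
`(x₁, r w₀) ∼ (x₀, r w₁)`: turning `x₀` into `x₁` is worth exactly `r` units of the conversion
`w₀ → w₁`. Rescaling each `S_Γ` so that it measures state changes in these units, any compound
state can be traded, one component at a time, against a reservoir of `w₀` and `w₁`, so that
`X ≺ Y` becomes a statement about the reservoir alone, which the reference entropy decides. If no
system has two states of different entropy, all states of a state space are equivalent.
-/

section CompoundStates
variable {α : Type*} {s t : ℝ} {X Y : List (ℝ × α)}

@[simp] lemma scaleL_nil : scaleL t ([] : List (ℝ × α)) = [] := rfl

@[simp] lemma scaleL_cons (p : ℝ × α) :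
    scaleL t (p :: X) = (t * p.1, p.2) :: scaleL t X := rfl

lemma scaleL_append : scaleL t (X ++ Y) = scaleL t X ++ scaleL t Y := List.map_append

lemma scaleL_scaleL : scaleL s (scaleL t X) = scaleL (s * t) X := by
  simp [scaleL, mul_assoc]

@[simp] lemma scaleL_one : scaleL 1 X = X := by simp [scaleL]

lemma posL_cons {p : ℝ × α} : posL (p :: X) ↔ 0 < p.1 ∧ posL X := by
  simp [posL]

lemma posL.of_perm (hX : posL X) (h : X.Perm Y) : posL Y :=
  fun p hp => hX p (h.symm.subset hp)

@[simp] lemma entL_nil (S : α → ℝ) : entL S ([] : List (ℝ × α)) = 0 := rfl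

@[simp] lemma entL_cons (S : α → ℝ) (p : ℝ × α) :
    entL S (p :: X) = p.1 * S p.2 + entL S X := rfl

lemma entL_append (S : α → ℝ) : entL S (X ++ Y) = entL S X + entL S Y := by
  simp [entL]

lemma entL_scaleL (S : α → ℝ) : entL S (scaleL t X) = t * entL S X := by
  induction X with
  | nil => simp
  | cons p X ih => simp [ih]; ring

lemma entL_perm (S : α → ℝ) (h : X.Perm Y) : entL S X = entL S Y :=
  (h.map _).sum_eq

lemma entL_eq_of_forall₂ {S : α → ℝ}
    (h : List.Forall₂ (fun p q => p.1 * S p.2 = q.1 * S q.2) X Y) : entL S X = entL S Y := by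
  induction h with
  | nil => rfl
  | cons hpq _ ih => simp only [entL_cons, hpq, ih]

@[simp] lemma massL_nil : massL ([] : List (ℝ × α)) = 0 := rfl

@[simp] lemma massL_cons (p : ℝ × α) : massL (p :: X) = p.1 + massL X := rfl

end CompoundStates

lemma List.exists_perm_forall₂_of_perm_map {β γ : Type*} {f : β → γ} {X Y : List β}
    (h : (X.map f).Perm (Y.map f)) :
    ∃ Y', Y.Perm Y' ∧ List.Forall₂ (fun p q => f p = f q) X Y' := by
  have hY : List.Forall₂ (fun b q => b = f q) (Y.map f) Y :=
    List.forall₂_map_left_iff.2 (List.forall₂_same.2 fun _ _ => rfl)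
  obtain ⟨Y', hfY', hY'⟩ := List.perm_comp_forall₂ h hY
  exact ⟨Y', hY'.symm, List.forall₂_map_left_iff.1 hfY'⟩

lemma SameSpace.exists_perm_forall₂ {ι : Type*} {Γ : ι → Type*} {X Y : List (ℝ × Σ j, Γ j)}
    (h : SameSpace X Y) :
    ∃ Y', Y.Perm Y' ∧ List.Forall₂ (fun p q => p.1 = q.1 ∧ p.2.1 = q.2.1) X Y' := by
  obtain ⟨Y', hYY', hXY'⟩ := List.exists_perm_forall₂_of_perm_map h
  exact ⟨Y', hYY', hXY'.imp fun _ _ h => Prod.ext_iff.1 h⟩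

lemma exists_threshold_of_cover {P Q : ℝ → Prop}
    (hcover : ∀ l, 0 < l → P l ∨ Q l)
    (hP : ∃ l, 0 < l ∧ P l) (hQ : ∃ l, 0 < l ∧ Q l)
    (hQP : ∀ l m, 0 < l → 0 < m → P l → Q m → m ≤ l)
    (hP_mono : ∀ l l', 0 < l → l < l' → P l → P l')
    (hP_closed : ∀ r, 0 < r → (∀ l, r < l → P l) → P r)
    (hQ_closed : ∀ r, 0 < r → (∀ l, 0 < l → l < r → Q l) → Q r) :
    ∃ r, 0 < r ∧ P r ∧ Q r := by
  obtain ⟨f, hf, hQf⟩ := hQ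
  set E := {l | 0 < l ∧ P l}
  have hfE : ∀ e ∈ E, f ≤ e := fun e he => hQP e f he.1 hf he.2 hQf
  have hr : 0 < sInf E := hf.trans_le (le_csInf hP hfE)
  refine ⟨sInf E, hr, hP_closed _ hr fun l hl => ?_, hQ_closed _ hr fun l hl hlr => ?_⟩
  · obtain ⟨e, he, hel⟩ := exists_lt_of_csInf_lt hP hl
    exact hP_mono e l he.1 hel he.2
  · refine (hcover l hl).resolve_left fun hPl => ?_
    exact (csInf_le ⟨f, hfE⟩ ⟨hl, hPl⟩).not_gt hlr

-- `refl` … `stability` are the axioms A1–A6, `comparable` is CH.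
structure AdiabaticOrder (ι : Type*) (Γ : ι → Type*) where
  prec : List (ℝ × Σ j, Γ j) → List (ℝ × Σ j, Γ j) → Prop
  prec_congr_perm : ∀ X X' Y Y' : List (ℝ × Σ j, Γ j), X.Perm X' → Y.Perm Y' →
    (prec X Y ↔ prec X' Y')
  refl : ∀ X, prec X X
  trans : ∀ X Y Z, prec X Y → prec Y Z → prec X Z
  append : ∀ X X' Y Y', prec X X' → prec Y Y' → prec (X ++ Y) (X' ++ Y')
  scale : ∀ t : ℝ, 0 < t → ∀ X Y, prec X Y → prec (scaleL t X) (scaleL t Y)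
  split : ∀ (l t : ℝ) (x : Σ j, Γ j), 0 < l → l < 1 → 0 < t →
    prec [(t, x)] [((1 - l) * t, x), (l * t, x)] ∧
    prec [((1 - l) * t, x), (l * t, x)] [(t, x)]
  stability : ∀ X Y Z₀ Z₁ (ε : ℕ → ℝ), (∀ n, 0 < ε n) →
    Filter.Tendsto ε Filter.atTop (nhds 0) →
    (∀ n, prec (X ++ scaleL (ε n) Z₀) (Y ++ scaleL (ε n) Z₁)) → prec X Y
  comparable : ∀ X Y : List (ℝ × Σ j, Γ j), posL X → posL Y → SameSpace X Y →
    prec X Y ∨ prec Y X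

namespace AdiabaticOrder

variable {ι : Type*} {Γ : ι → Type*} (H : AdiabaticOrder ι Γ)

def Equivalent (X Y : List (ℝ × Σ j, Γ j)) : Prop := H.prec X Y ∧ H.prec Y X

local infix:50 " ≺ " => H.prec
local infix:50 " ∼ " => H.Equivalent

instance : @Trans _ _ _ H.prec H.prec H.prec := ⟨H.trans _ _ _⟩
instance : @Trans _ _ _ H.Equivalent H.prec H.prec := ⟨fun h h' => H.trans _ _ _ h.1 h'⟩
instance : @Trans _ _ _ H.prec H.Equivalent H.prec := ⟨fun h h' => H.trans _ _ _ h h'.1⟩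
instance : @Trans _ _ _ H.Equivalent H.Equivalent H.Equivalent :=
  ⟨fun h h' => ⟨H.trans _ _ _ h.1 h'.1, H.trans _ _ _ h'.2 h.2⟩⟩

variable {H} {X X' Y Y' Z W : List (ℝ × Σ j, Γ j)}

lemma Equivalent.rfl : X ∼ X := ⟨H.refl X, H.refl X⟩

lemma Equivalent.symm (h : X ∼ Y) : Y ∼ X := ⟨h.2, h.1⟩

lemma Equivalent.append (h : X ∼ X') (h' : Y ∼ Y') : X ++ Y ∼ X' ++ Y' :=
  ⟨H.append _ _ _ _ h.1 h'.1, H.append _ _ _ _ h.2 h'.2⟩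

lemma Equivalent.cons (p : ℝ × Σ j, Γ j) (h : X ∼ Y) : p :: X ∼ p :: Y :=
  (Equivalent.rfl (X := [p])).append h

lemma Equivalent.scaleL {t : ℝ} (ht : 0 < t) (h : X ∼ Y) : scaleL t X ∼ scaleL t Y :=
  ⟨H.scale t ht _ _ h.1, H.scale t ht _ _ h.2⟩

lemma prec_of_perm (hX : X.Perm X') (hY : Y.Perm Y') (h : X ≺ Y) : X' ≺ Y' :=
  (H.prec_congr_perm X X' Y Y' hX hY).1 h

lemma equivalent_of_perm (h : X.Perm Y) : X ∼ Y :=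
  ⟨prec_of_perm .rfl h (H.refl X), prec_of_perm h .rfl (H.refl X)⟩

lemma prec_append_left (h : X ≺ Y) : Z ++ X ≺ Z ++ Y := H.append _ _ _ _ (H.refl Z) h

lemma prec_append_right (h : X ≺ Y) : X ++ Z ≺ Y ++ Z := H.append _ _ _ _ h (H.refl Z)

lemma equivalent_split {s t : ℝ} (hs : 0 < s) (ht : 0 < t) (x : Σ j, Γ j) :
    [(s + t, x)] ∼ [(s, x), (t, x)] := by
  have hst : 0 < s + t := by positivity
  have h := H.split (t / (s + t)) (s + t) x (by positivity)
    ((div_lt_one hst).2 (by linarith)) hst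
  rwa [show (1 - t / (s + t)) * (s + t) = s by field_simp; ring,
    div_mul_cancel₀ t hst.ne'] at h

lemma equivalent_scaleL_add {s t : ℝ} (hs : 0 < s) (ht : 0 < t) (hX : posL X) :
    scaleL (s + t) X ∼ scaleL s X ++ scaleL t X := by
  induction X with
  | nil => exact .rfl
  | cons p X ih =>
    rw [posL_cons] at hX
    calc scaleL (s + t) (p :: X)
        ∼ [(s * p.1, p.2), (t * p.1, p.2)] ++ (scaleL s X ++ scaleL t X) := by
          rw [scaleL_cons, add_mul]
          exact (equivalent_split (mul_pos hs hX.1) (mul_pos ht hX.1) p.2).append (ih hX.2)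
      _ ∼ scaleL s (p :: X) ++ scaleL t (p :: X) := by
          simp only [scaleL_cons, List.cons_append, List.nil_append]
          exact equivalent_of_perm (.cons _ List.perm_middle.symm)

lemma prec_stability {Z₀ Z₁ : List (ℝ × Σ j, Γ j)} {δ : ℝ} (hδ : 0 < δ)
    (h : ∀ ε, 0 < ε → ε < δ → X ++ scaleL ε Z₀ ≺ Y ++ scaleL ε Z₁) : X ≺ Y := by
  refine H.stability X Y Z₀ Z₁ (fun n => δ / 2 * (1 / 2) ^ n) (fun n => by positivity) ?_
    fun n => h _ (by positivity) ?_
  · simpa using (tendsto_pow_atTop_nhds_zero_of_lt_one (by norm_num : (0 : ℝ) ≤ 1 / 2)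
      (by norm_num)).const_mul (δ / 2)
  · have : (1 / 2 : ℝ) ^ n ≤ 1 := pow_le_one₀ (by norm_num) (by norm_num)
    nlinarith

lemma equivalent_halves (hX : posL X) : X ∼ scaleL (1 / 2) X ++ scaleL (1 / 2) X := by
  simpa only [add_halves, scaleL_one] using
    equivalent_scaleL_add (H := H) (one_half_pos : (0 : ℝ) < 1 / 2) one_half_pos hX

lemma prec_append_half (hX : posL X) (hY : posL Y) (h : X ++ Z ≺ Y ++ Z) :
    X ++ scaleL (1 / 2) Z ≺ Y ++ scaleL (1 / 2) Z := by
  set X₂ := scaleL (1 / 2) X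
  set Y₂ := scaleL (1 / 2) Y
  set Z₂ := scaleL (1 / 2) Z
  have h₂ : X₂ ++ Z₂ ≺ Y₂ ++ Z₂ := by
    simpa only [scaleL_append] using H.scale _ one_half_pos _ _ h
  calc X ++ Z₂
      ∼ X₂ ++ (X₂ ++ Z₂) := by
        rw [← List.append_assoc]; exact (equivalent_halves hX).append .rfl
    _ ≺ X₂ ++ (Y₂ ++ Z₂) := prec_append_left h₂
    _ ∼ Y₂ ++ (X₂ ++ Z₂) := by
        simp only [← List.append_assoc]
        exact equivalent_of_perm (List.perm_append_comm.append_right _)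
    _ ≺ Y₂ ++ (Y₂ ++ Z₂) := prec_append_left h₂
    _ ∼ Y ++ Z₂ := by
        rw [← List.append_assoc]; exact (equivalent_halves hY).symm.append .rfl

lemma prec_of_append_right (hX : posL X) (hY : posL Y) (h : X ++ Z ≺ Y ++ Z) : X ≺ Y := by
  have key : ∀ n : ℕ, X ++ scaleL ((1 / 2) ^ n) Z ≺ Y ++ scaleL ((1 / 2) ^ n) Z := by
    intro n
    induction n with
    | zero => simpa using h
    | succ n ih => simpa [pow_succ', scaleL_scaleL] using prec_append_half hX hY ih
  exact H.stability X Y Z Z _ (fun n => by positivity)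
    (tendsto_pow_atTop_nhds_zero_of_lt_one (by norm_num) (by norm_num)) key

lemma prec_of_append_left (hX : posL X) (hY : posL Y) (h : Z ++ X ≺ Z ++ Y) : X ≺ Y :=
  prec_of_append_right hX hY (prec_of_perm List.perm_append_comm List.perm_append_comm h)

lemma Equivalent.of_append_right (hX : posL X) (hY : posL Y) (h : X ++ Z ∼ Y ++ Z) : X ∼ Y :=
  ⟨prec_of_append_right hX hY h.1, prec_of_append_right hY hX h.2⟩

lemma prec_singleton_iff {t : ℝ} (ht : 0 < t) {x y : Σ j, Γ j} :
    [(t, x)] ≺ [(t, y)] ↔ [(1, x)] ≺ [(1, y)] := by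
  constructor
  · intro h
    simpa [inv_mul_cancel₀ ht.ne'] using H.scale t⁻¹ (inv_pos.2 ht) _ _ h
  · intro h
    simpa using H.scale t ht _ _ h

lemma equivalent_pair_split (p : ℝ × Σ j, Γ j) {s t : ℝ} (hs : 0 < s) (ht : 0 < t)
    (x : Σ j, Γ j) : [p, (s + t, x)] ∼ [p, (s, x)] ++ [(t, x)] :=
  (equivalent_split hs ht x).cons p

section Calibration

variable {x₀ x₁ w₀ w₁ : Σ j, Γ j}

lemma prec_calibration_mono (hw₀₁ : [(1, w₀)] ≺ [(1, w₁)]) {l l' : ℝ} (hl : 0 < l)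
    (hll' : l < l') (h : [(1, x₁), (l, w₀)] ≺ [(1, x₀), (l, w₁)]) :
    [(1, x₁), (l', w₀)] ≺ [(1, x₀), (l', w₁)] := by
  obtain ⟨d, hd, rfl⟩ : ∃ d, 0 < d ∧ l' = l + d := ⟨l' - l, by linarith, by ring⟩
  calc [(1, x₁), (l + d, w₀)]
      ∼ [(1, x₁), (l, w₀)] ++ [(d, w₀)] := equivalent_pair_split _ hl hd w₀
    _ ≺ [(1, x₀), (l, w₁)] ++ [(d, w₀)] := prec_append_right h
    _ ≺ [(1, x₀), (l, w₁)] ++ [(d, w₁)] := prec_append_left ((prec_singleton_iff hd).2 hw₀₁)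
    _ ∼ [(1, x₀), (l + d, w₁)] := (equivalent_pair_split _ hl hd w₁).symm

lemma le_of_prec_calibration (hw₁₀ : ¬ [(1, w₁)] ≺ [(1, w₀)]) {l m : ℝ} (hl : 0 < l)
    (hA : [(1, x₁), (l, w₀)] ≺ [(1, x₀), (l, w₁)])
    (hB : [(1, x₀), (m, w₁)] ≺ [(1, x₁), (m, w₀)]) : m ≤ l := by
  by_contra! hlm
  obtain ⟨d, hd, rfl⟩ : ∃ d, 0 < d ∧ m = l + d := ⟨m - l, by linarith, by ring⟩
  refine hw₁₀ ((prec_singleton_iff hd).1 (prec_of_append_left (Z := [(1, x₀), (l, w₁)])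
    (by simp [posL, hd]) (by simp [posL, hd]) ?_))
  calc [(1, x₀), (l, w₁)] ++ [(d, w₁)]
      ∼ [(1, x₀), (l + d, w₁)] := (equivalent_pair_split _ hl hd w₁).symm
    _ ≺ [(1, x₁), (l + d, w₀)] := hB
    _ ∼ [(1, x₁), (l, w₀)] ++ [(d, w₀)] := equivalent_pair_split _ hl hd w₀
    _ ≺ [(1, x₀), (l, w₁)] ++ [(d, w₀)] := prec_append_right hA

lemma prec_calibration_of_forall_gt {r : ℝ} (hr : 0 < r)
    (h : ∀ l, r < l → [(1, x₁), (l, w₀)] ≺ [(1, x₀), (l, w₁)]) :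
    [(1, x₁), (r, w₀)] ≺ [(1, x₀), (r, w₁)] := by
  refine prec_stability (Z₀ := [(1, w₀)]) (Z₁ := [(1, w₁)]) one_pos fun ε hε _ => ?_
  simp only [scaleL_cons, scaleL_nil, mul_one]
  calc [(1, x₁), (r, w₀)] ++ [(ε, w₀)]
      ∼ [(1, x₁), (r + ε, w₀)] := (equivalent_pair_split _ hr hε w₀).symm
    _ ≺ [(1, x₀), (r + ε, w₁)] := h _ (by linarith)
    _ ∼ [(1, x₀), (r, w₁)] ++ [(ε, w₁)] := equivalent_pair_split _ hr hε w₁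

lemma prec_calibration_of_forall_lt {r : ℝ} (hr : 0 < r)
    (h : ∀ l, 0 < l → l < r → [(1, x₀), (l, w₁)] ≺ [(1, x₁), (l, w₀)]) :
    [(1, x₀), (r, w₁)] ≺ [(1, x₁), (r, w₀)] := by
  refine prec_stability (Z₀ := [(1, w₀)]) (Z₁ := [(1, w₁)]) hr fun ε hε hεr => ?_
  simp only [scaleL_cons, scaleL_nil, mul_one]
  obtain ⟨l, hl, rfl⟩ : ∃ l, 0 < l ∧ r = l + ε := ⟨r - ε, by linarith, by ring⟩
  calc [(1, x₀), (l + ε, w₁)] ++ [(ε, w₀)]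
      ∼ [(1, x₀), (l, w₁)] ++ [(ε, w₁)] ++ [(ε, w₀)] :=
        (equivalent_pair_split _ hl hε w₁).append .rfl
    _ ≺ [(1, x₁), (l, w₀)] ++ [(ε, w₁)] ++ [(ε, w₀)] :=
        prec_append_right (prec_append_right (h l hl (by linarith)))
    _ ∼ [(1, x₁), (l, w₀)] ++ [(ε, w₀)] ++ [(ε, w₁)] :=
        equivalent_of_perm (by simpa using List.Perm.swap _ _ _)
    _ ∼ [(1, x₁), (l + ε, w₀)] ++ [(ε, w₁)] :=
        (equivalent_pair_split _ hl hε w₀).symm.append .rfl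

lemma prec_of_forall_prec_pair_rescaled
    (h : ∀ l, 0 < l → [(1, x₀), (l, w₁)] ≺ [(1, x₁), (l, w₀)]) :
    [(1, w₁)] ≺ [(1, w₀)] := by
  refine prec_stability (Z₀ := [(1, x₀)]) (Z₁ := [(1, x₁)]) one_pos fun ε hε _ => ?_
  have := H.scale ε hε _ _ (h ε⁻¹ (inv_pos.2 hε))
  simp only [scaleL_cons, scaleL_nil, mul_one, mul_inv_cancel₀ hε.ne'] at this
  simp only [scaleL_cons, scaleL_nil, mul_one, List.singleton_append]
  exact prec_of_perm (.swap _ _ _) (.swap _ _ _) this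

lemma prec_of_forall_prec_pair
    (h : ∀ l, 0 < l → [(1, x₁), (l, w₀)] ≺ [(1, x₀), (l, w₁)]) :
    [(1, x₁)] ≺ [(1, x₀)] := by
  refine prec_stability (Z₀ := [(1, w₀)]) (Z₁ := [(1, w₁)]) one_pos fun ε hε _ => ?_
  simpa using h ε hε

theorem exists_equivalent_calibration (hx : x₀.1 = x₁.1) (hw : w₀.1 = w₁.1)
    (hw₀₁ : [(1, w₀)] ≺ [(1, w₁)]) (hw₁₀ : ¬ [(1, w₁)] ≺ [(1, w₀)])
    (hx₁₀ : ¬ [(1, x₁)] ≺ [(1, x₀)]) :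
    ∃ r, 0 < r ∧ [(1, x₁), (r, w₀)] ∼ [(1, x₀), (r, w₁)] := by
  have hcover : ∀ l, 0 < l → [(1, x₁), (l, w₀)] ≺ [(1, x₀), (l, w₁)] ∨
      [(1, x₀), (l, w₁)] ≺ [(1, x₁), (l, w₀)] := fun l hl =>
    H.comparable _ _ (by simp [posL, hl]) (by simp [posL, hl])
      (by simp [SameSpace, hx, hw])
  obtain ⟨r, hr, hAB, hBA⟩ := exists_threshold_of_cover hcover
    (by
      by_contra! h
      exact hw₁₀ (prec_of_forall_prec_pair_rescaled fun l hl =>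
        (hcover l hl).resolve_left (h l hl)))
    (by
      by_contra! h
      exact hx₁₀ (prec_of_forall_prec_pair fun l hl =>
        (hcover l hl).resolve_right (h l hl)))
    (fun l m hl _ hA hB => le_of_prec_calibration hw₁₀ hl hA hB)
    (fun l l' hl hll' => prec_calibration_mono hw₀₁ hl hll')
    (fun r hr => prec_calibration_of_forall_gt hr)
    (fun r hr => prec_calibration_of_forall_lt hr)
  exact ⟨r, hr, hAB, hBA⟩

end Calibration

lemma equivalent_of_coe_eq (h : (X : Multiset (ℝ × Σ j, Γ j)) = Y) : X ∼ Y :=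
  equivalent_of_perm (Multiset.coe_eq_coe.1 h)

lemma equivalent_of_forall₂ (h : List.Forall₂ (fun p q => [p] ∼ [q]) X Y) : X ∼ Y := by
  induction h with
  | nil => exact .rfl
  | cons hpq _ ih => exact hpq.append ih

lemma prec_iff_of_equivalent_append (hX : posL X) (hY : posL Y) (hZ : posL Z) (hW : posL W)
    (h : X ++ Z ∼ Y ++ W) : X ≺ Y ↔ W ≺ Z := by
  constructor
  · intro hXY
    refine prec_of_append_left (Z := Y) hW hZ ?_
    calc Y ++ W ∼ X ++ Z := h.symm
      _ ≺ Y ++ Z := prec_append_right hXY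
  · intro hWZ
    refine prec_of_append_right (Z := Z) hX hY ?_
    calc X ++ Z ∼ Y ++ W := h
      _ ≺ Y ++ Z := prec_append_left hWZ

lemma equivalent_transfer {x₀ x₁ w₀ w₁ z y : Σ j, Γ j} {r u lam p q : ℝ}
    (hcal : [(1, x₁), (r, w₀)] ∼ [(1, x₀), (r, w₁)]) (hr : 0 < r) (hu : 0 < u)
    (hlam : 0 < lam) (hq : 0 < q) (hp : u * r < p)
    (hzy : [(lam, z), (u, x₀)] ∼ [(lam, y), (u, x₁)]) :
    [(lam, z), (p, w₀), (q, w₁)] ∼ [(lam, y), (p - u * r, w₀), (q + u * r, w₁)] := by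
  have hcal' : [(u, x₁), (u * r, w₀)] ∼ [(u, x₀), (u * r, w₁)] := by
    simpa using hcal.scaleL hu
  have hur : 0 < u * r := mul_pos hu hr
  have hpur : 0 < p - u * r := by linarith
  refine Equivalent.of_append_right (Z := [(u, x₀)])
    (by simp [posL, hlam, hq, hur.trans hp]) (by simp [posL, hlam, hpur]; linarith) ?_
  calc [(lam, z), (p, w₀), (q, w₁)] ++ [(u, x₀)]
      ∼ [(lam, z), (u, x₀)] ++ [(p, w₀), (q, w₁)] := equivalent_of_coe_eq (by
        simp only [← Multiset.cons_coe, ← Multiset.coe_add, Multiset.coe_nil,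
          Multiset.cons_add, Multiset.zero_add, Multiset.cons_swap])
    _ ∼ [(lam, y), (u, x₁)] ++ [(u * r + (p - u * r), w₀), (q, w₁)] := by
        rw [add_sub_cancel]; exact hzy.append .rfl
    _ ∼ [(lam, y), (u, x₁)] ++ ([(u * r, w₀), (p - u * r, w₀)] ++ [(q, w₁)]) :=
        Equivalent.rfl.append ((equivalent_split hur hpur w₀).append .rfl)
    _ ∼ [(lam, y)] ++ [(u, x₀), (u * r, w₁)] ++ [(p - u * r, w₀), (q, w₁)] :=
        (hcal'.append (Equivalent.rfl (X := [(p - u * r, w₀), (q, w₁)]))).cons (lam, y)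
    _ ∼ [(lam, y), (p - u * r, w₀)] ++ [(u * r, w₁), (q, w₁)] ++ [(u, x₀)] :=
        equivalent_of_coe_eq (by
          simp only [← Multiset.cons_coe, ← Multiset.coe_add, Multiset.coe_nil,
            Multiset.cons_add, Multiset.zero_add, Multiset.cons_swap])
    _ ∼ [(lam, y), (p - u * r, w₀), (q + u * r, w₁)] ++ [(u, x₀)] := by
        rw [add_comm q]
        exact (Equivalent.rfl.append (equivalent_split hur hq w₁).symm).append .rfl

section Entropy

variable {i : ι} {S : Γ i → ℝ}

lemma prec_singleton_iff_entropy (hS : IsEntropyFor H.prec i S) {t : ℝ} (ht : 0 < t)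
    {x y : Γ i} : [(t, ⟨i, x⟩)] ≺ [(t, ⟨i, y⟩)] ↔ S x ≤ S y := by
  rw [← mul_le_mul_iff_right₀ ht]
  simpa [entL, liftL] using hS [(t, x)] [(t, y)] (by simp) (by simp) (by simp [posL, ht])
    (by simp [posL, ht]) rfl

lemma equivalent_singleton_of_entropy_eq (hS : IsEntropyFor H.prec i S) {t : ℝ} (ht : 0 < t)
    {x y : Γ i} (h : S x = S y) : [(t, ⟨i, x⟩)] ∼ [(t, ⟨i, y⟩)] :=
  ⟨(prec_singleton_iff_entropy hS ht).2 h.le, (prec_singleton_iff_entropy hS ht).2 h.ge⟩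

lemma equivalent_of_entL_eq (hS : IsEntropyFor H.prec i S) {X Y : List (ℝ × Γ i)}
    (hX : X ≠ []) (hY : Y ≠ []) (hXp : posL X) (hYp : posL Y) (hm : massL X = massL Y)
    (h : entL S X = entL S Y) : liftL i X ∼ liftL i Y :=
  ⟨(hS X Y hX hY hXp hYp hm).2 h.le, (hS Y X hY hX hYp hXp hm.symm).2 h.ge⟩

end Entropy

-- `f` prices state changes within `Γ i` in units of the conversion `w₀ → w₁`.
variable (H) in
def IsCalibrated (w₀ w₁ : Σ j, Γ j) {i : ι} (f : Γ i → ℝ) : Prop :=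
  ∀ (x y : Γ i) (lam P Q : ℝ), 0 < lam → |lam * (f x - f y)| < P → |lam * (f x - f y)| < Q →
    [(lam, ⟨i, x⟩), (P, w₀), (Q, w₁)] ∼
      [(lam, ⟨i, y⟩), (P - lam * (f x - f y), w₀), (Q + lam * (f x - f y), w₁)]

lemma IsCalibrated.of_transfer {w₀ w₁ : Σ j, Γ j} {i : ι} {f : Γ i → ℝ}
    (htransfer : ∀ x y : Γ i, f y < f x → ∀ lam p q : ℝ, 0 < lam → 0 < q →
      lam * (f x - f y) < p → [(lam, ⟨i, x⟩), (p, w₀), (q, w₁)] ∼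
        [(lam, ⟨i, y⟩), (p - lam * (f x - f y), w₀), (q + lam * (f x - f y), w₁)])
    (hconst : ∀ x y : Γ i, f x = f y → ∀ lam : ℝ, 0 < lam → [(lam, ⟨i, x⟩)] ∼ [(lam, ⟨i, y⟩)]) :
    H.IsCalibrated w₀ w₁ f := by
  intro x y lam P Q hlam hP hQ
  rcases lt_trichotomy (f y) (f x) with hxy | hxy | hxy
  · exact htransfer x y hxy lam P Q hlam ((abs_nonneg _).trans_lt hQ)
      ((le_abs_self _).trans_lt hP)
  · rw [hxy, sub_self, mul_zero, sub_zero, add_zero]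
    exact (hconst x y hxy.symm lam hlam).append .rfl
  · set s := lam * (f x - f y)
    have hs : s < 0 := mul_neg_of_pos_of_neg hlam (sub_neg.2 hxy)
    rw [abs_of_neg hs] at hP hQ
    have h := htransfer y x hxy lam (P - s) (Q + s) hlam (by linarith) (by linarith)
    rw [show lam * (f y - f x) = -s by ring, sub_neg_eq_add, sub_add_cancel,
      add_neg_cancel_right] at h
    exact h.symm

lemma equivalent_transfer_of_entropy {i : ι} {S : Γ i → ℝ} (hS : IsEntropyFor H.prec i S)
    {x₀ x₁ : Γ i} (hx : S x₀ < S x₁) {w₀ w₁ : Σ j, Γ j} {a r : ℝ} (hr : 0 < r)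
    (har : a * (S x₁ - S x₀) = r) (hcal : [(1, ⟨i, x₁⟩), (r, w₀)] ∼ [(1, ⟨i, x₀⟩), (r, w₁)])
    {x y : Γ i} (hxy : S y < S x) {lam p q : ℝ} (hlam : 0 < lam) (hq : 0 < q)
    (hp : lam * (a * S x - a * S y) < p) :
    [(lam, ⟨i, x⟩), (p, w₀), (q, w₁)] ∼ [(lam, ⟨i, y⟩), (p - lam * (a * S x - a * S y), w₀),
      (q + lam * (a * S x - a * S y), w₁)] := by
  have hΔ : 0 < S x₁ - S x₀ := sub_pos.2 hx
  -- `u` copies of `x₀ → x₁` carry the same entropy change as `lam` copies of `y → x`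
  set u := lam * (S x - S y) / (S x₁ - S x₀)
  have hu : 0 < u := div_pos (mul_pos hlam (sub_pos.2 hxy)) hΔ
  have hs : lam * (a * S x - a * S y) = u * r := by
    rw [← har]; simp only [u]; field_simp
  rw [hs] at hp ⊢
  refine equivalent_transfer hcal hr hu hlam hq hp
    (equivalent_of_entL_eq hS (X := [(lam, x), (u, x₀)]) (Y := [(lam, y), (u, x₁)])
      (by simp) (by simp) (by simp [posL, hlam, hu]) (by simp [posL, hlam, hu]) (by simp) ?_)
  simp only [entL_cons, entL_nil, u]
  field_simp
  ring

theorem exists_isCalibrated {i : ι} {S : Γ i → ℝ} (hS : IsEntropyFor H.prec i S)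
    {k : ι} {w₀ w₁ : Γ k} (hw₀₁ : [(1, ⟨k, w₀⟩)] ≺ [(1, ⟨k, w₁⟩)])
    (hw₁₀ : ¬ [(1, ⟨k, w₁⟩)] ≺ [(1, ⟨k, w₀⟩)]) :
    ∃ a, 0 < a ∧ H.IsCalibrated ⟨k, w₀⟩ ⟨k, w₁⟩ (fun x => a * S x) := by
  have hconst {a : ℝ} (ha : 0 < a) (x y : Γ i) (hxy : a * S x = a * S y) (lam : ℝ)
      (hlam : 0 < lam) : [(lam, ⟨i, x⟩)] ∼ [(lam, ⟨i, y⟩)] :=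
    equivalent_singleton_of_entropy_eq hS hlam (mul_left_cancel₀ ha.ne' hxy)
  by_cases hS_const : ∃ x₀ x₁ : Γ i, S x₀ < S x₁
  · obtain ⟨x₀, x₁, hx⟩ := hS_const
    obtain ⟨r, hr, hcal⟩ := exists_equivalent_calibration (x₀ := ⟨i, x₀⟩) (x₁ := ⟨i, x₁⟩)
      (w₀ := ⟨k, w₀⟩) (w₁ := ⟨k, w₁⟩) rfl rfl hw₀₁ hw₁₀
      (by rwa [prec_singleton_iff_entropy hS one_pos, not_le])
    have hΔ : S x₁ - S x₀ ≠ 0 := (sub_pos.2 hx).ne'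
    have ha : 0 < r / (S x₁ - S x₀) := div_pos hr (sub_pos.2 hx)
    refine ⟨_, ha, .of_transfer (fun x y hxy lam p q hlam hq hp => ?_) (hconst ha)⟩
    exact equivalent_transfer_of_entropy hS hx hr (div_mul_cancel₀ r hΔ) hcal
      ((mul_lt_mul_iff_right₀ ha).1 hxy) hlam hq hp
  · simp only [not_exists, not_lt] at hS_const
    refine ⟨1, one_pos, .of_transfer (fun x y hxy => ?_) (hconst one_pos)⟩
    simp only [one_mul] at hxy
    exact ((hS_const y x).not_gt hxy).elim

lemma exists_equivalent_append_reservoir {w₀ w₁ : Σ j, Γ j} {Sg : (Σ j, Γ j) → ℝ}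
    (hcal : ∀ i, H.IsCalibrated w₀ w₁ (fun x : Γ i => Sg ⟨i, x⟩))
    {X Y : List (ℝ × Σ j, Γ j)}
    (hXY : List.Forall₂ (fun p q => p.1 = q.1 ∧ p.2.1 = q.2.1) X Y) (hX : posL X) :
    ∃ M, ∀ P Q, M < P → M < Q → X ++ [(P, w₀), (Q, w₁)] ∼
      Y ++ [(P - (entL Sg X - entL Sg Y), w₀), (Q + (entL Sg X - entL Sg Y), w₁)] := by
  induction hXY with
  | nil => exact ⟨0, fun P Q _ _ => by simpa using Equivalent.rfl⟩
  | @cons p q X Y hpq _ ih =>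
    obtain ⟨lam, i, x⟩ := p
    obtain ⟨_, _, y⟩ := q
    obtain ⟨rfl, rfl⟩ := hpq
    rw [posL_cons] at hX
    obtain ⟨M, hM⟩ := ih hX.2
    set s := lam * (Sg ⟨i, x⟩ - Sg ⟨i, y⟩)
    set D := entL Sg X - entL Sg Y
    refine ⟨max M (|s| + |D|), fun P Q hP hQ => ?_⟩
    rw [max_lt_iff] at hP hQ
    have hDs : entL Sg ((lam, ⟨i, x⟩) :: X) - entL Sg ((lam, ⟨i, y⟩) :: Y) = D + s := by
      simp only [entL_cons, D, s]; ring
    have hsP : |s| < P - D := by linarith [le_abs_self D]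
    have hsQ : |s| < Q + D := by linarith [neg_abs_le D]
    rw [hDs, ← sub_sub, ← add_assoc]
    calc (lam, ⟨i, x⟩) :: X ++ [(P, w₀), (Q, w₁)]
        ∼ (lam, ⟨i, x⟩) :: (Y ++ [(P - D, w₀), (Q + D, w₁)]) :=
          (hM P Q hP.1 hQ.1).cons _
      _ ∼ Y ++ [(lam, ⟨i, x⟩), (P - D, w₀), (Q + D, w₁)] :=
          equivalent_of_perm List.perm_middle.symm
      _ ∼ Y ++ [(lam, ⟨i, y⟩), (P - D - s, w₀), (Q + D + s, w₁)] :=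
          Equivalent.rfl.append (hcal i x y lam _ _ hX.1 hsP hsQ)
      _ ∼ (lam, ⟨i, y⟩) :: Y ++ [(P - D - s, w₀), (Q + D + s, w₁)] :=
          equivalent_of_perm List.perm_middle

lemma prec_reservoir_iff {k : ι} {S : Γ k → ℝ} (hS : IsEntropyFor H.prec k S) {w₀ w₁ : Γ k}
    (hw : S w₀ < S w₁) {m D : ℝ} (hm : |D| < m) :
    [(m - D, ⟨k, w₀⟩), (m + D, ⟨k, w₁⟩)] ≺ [(m, ⟨k, w₀⟩), (m, ⟨k, w₁⟩)] ↔ D ≤ 0 := by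
  obtain ⟨hDl, hDr⟩ := abs_lt.1 hm
  refine (hS [(m - D, w₀), (m + D, w₁)] [(m, w₀), (m, w₁)] (by simp) (by simp)
    (by simp [posL]; constructor <;> linarith) (by simp [posL]; linarith)
    (by simp only [massL_cons, massL_nil]; ring)).trans ?_
  simp only [entL_cons, entL_nil]
  constructor <;> intro h <;> nlinarith

theorem prec_iff_entL_le_of_isCalibrated {k : ι} {S : Γ k → ℝ} (hS : IsEntropyFor H.prec k S)
    {w₀ w₁ : Γ k} (hw : S w₀ < S w₁) {Sg : (Σ j, Γ j) → ℝ}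
    (hcal : ∀ i, H.IsCalibrated ⟨k, w₀⟩ ⟨k, w₁⟩ (fun x : Γ i => Sg ⟨i, x⟩))
    {X Y : List (ℝ × Σ j, Γ j)} (hX : posL X) (hY : posL Y) (hXY : SameSpace X Y) :
    X ≺ Y ↔ entL Sg X ≤ entL Sg Y := by
  obtain ⟨Y', hYY', hXY'⟩ := hXY.exists_perm_forall₂
  obtain ⟨M, hM⟩ := exists_equivalent_append_reservoir hcal hXY' hX
  set D := entL Sg X - entL Sg Y'
  set m := max M |D| + 1
  have hMm : M < m := by linarith [le_max_left M |D|]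
  have hDm : |D| < m := by linarith [le_max_right M |D|]
  obtain ⟨hDl, hDr⟩ := abs_lt.1 hDm
  calc X ≺ Y ↔ X ≺ Y' := H.prec_congr_perm _ _ _ _ (.refl X) hYY'
    _ ↔ [(m - D, ⟨k, w₀⟩), (m + D, ⟨k, w₁⟩)] ≺ [(m, ⟨k, w₀⟩), (m, ⟨k, w₁⟩)] :=
        prec_iff_of_equivalent_append hX (hY.of_perm hYY') (by simp [posL]; linarith)
          (by simp [posL]; constructor <;> linarith) (hM m m hMm hMm)
    _ ↔ D ≤ 0 := prec_reservoir_iff hS hw hDm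
    _ ↔ entL Sg X ≤ entL Sg Y := by rw [entL_perm Sg hYY']; exact sub_nonpos

theorem prec_iff_entL_le_of_entropy_const {S : ∀ i, Γ i → ℝ}
    (hS : ∀ i, IsEntropyFor H.prec i (S i)) (hconst : ∀ i (x y : Γ i), S i x = S i y)
    {X Y : List (ℝ × Σ j, Γ j)} (hX : posL X) (hXY : SameSpace X Y) :
    X ≺ Y ↔ entL (fun σ => S σ.1 σ.2) X ≤ entL (fun σ => S σ.1 σ.2) Y := by
  obtain ⟨Y', hYY', hXY'⟩ := hXY.exists_perm_forall₂
  have hpointwise := ((List.forall₂_and_left _ _).2 ⟨hX, hXY'⟩).imp (S := fun p q =>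
      [p] ∼ [q] ∧ p.1 * S p.2.1 p.2.2 = q.1 * S q.2.1 q.2.2) <| by
    rintro ⟨lam, i, x⟩ ⟨_, _, y⟩ ⟨hlam, rfl, rfl⟩
    exact ⟨equivalent_singleton_of_entropy_eq (hS i) hlam (hconst i x y), by rw [hconst i x y]⟩
  rw [H.prec_congr_perm _ _ _ _ (.refl X) hYY', entL_perm _ hYY',
    entL_eq_of_forall₂ (hpointwise.imp fun _ _ => And.right)]
  exact iff_of_true (equivalent_of_forall₂ (hpointwise.imp fun _ _ => And.left)).1 le_rfl

end AdiabaticOrder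

/-- Theorem 2 of Lieb–Yngvason (consistent entropy scales): if CH holds for all
compound systems and each system `Γ i` has an entropy function `S i` in the
sense of Theorem 1, then there are constants `a i > 0` and `B i` such that the
entropy `Sg ⟨i, x⟩ = a i * S i x + B i` is additive, extensive, and such that
for states `X`, `Y` in the same state space, `X ≺ Y` iff `Sg(X) ≤ Sg(Y)`. -/
theorem consistent_entropy_scales {ι : Type*} {Γ : ι → Type*}
    (prec : List (ℝ × Σ j, Γ j) → List (ℝ × Σ j, Γ j) → Prop)
    (hperm : ∀ X X' Y Y' : List (ℝ × Σ j, Γ j), X.Perm X' → Y.Perm Y' →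
      (prec X Y ↔ prec X' Y'))
    -- A1–A6
    (A1 : ∀ X, prec X X)
    (A2 : ∀ X Y Z, prec X Y → prec Y Z → prec X Z)
    (A3 : ∀ X X' Y Y', prec X X' → prec Y Y' → prec (X ++ Y) (X' ++ Y'))
    (A4 : ∀ t : ℝ, 0 < t → ∀ X Y, prec X Y → prec (scaleL t X) (scaleL t Y))
    (A5 : ∀ (l t : ℝ) (x : Σ j, Γ j), 0 < l → l < 1 → 0 < t →
      prec [(t, x)] [((1 - l) * t, x), (l * t, x)] ∧
      prec [((1 - l) * t, x), (l * t, x)] [(t, x)])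
    (A6 : ∀ X Y Z₀ Z₁ (ε : ℕ → ℝ), (∀ n, 0 < ε n) →
      Filter.Tendsto ε Filter.atTop (nhds 0) →
      (∀ n, prec (X ++ scaleL (ε n) Z₀) (Y ++ scaleL (ε n) Z₁)) → prec X Y)
    -- CH for all compound systems
    (CH : ∀ X Y : List (ℝ × Σ j, Γ j), posL X → posL Y → SameSpace X Y →
      prec X Y ∨ prec Y X)
    -- each system has an entropy function in the sense of Theorem 1
    (S : ∀ i, Γ i → ℝ) (hS : ∀ i, IsEntropyFor prec i (S i)) :
    ∃ a B : ι → ℝ, ∃ Sg : (Σ j, Γ j) → ℝ,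
      (∀ i, 0 < a i) ∧
      (∀ (i : ι) (x : Γ i), Sg ⟨i, x⟩ = a i * S i x + B i) ∧
      -- additivity
      (∀ X Y : List (ℝ × Σ j, Γ j), entL Sg (X ++ Y) = entL Sg X + entL Sg Y) ∧
      -- extensivity
      (∀ (t : ℝ) (X : List (ℝ × Σ j, Γ j)), entL Sg (scaleL t X) = t * entL Sg X) ∧
      -- monotonicity for states in the same state space
      (∀ X Y : List (ℝ × Σ j, Γ j), posL X → posL Y → SameSpace X Y →
        (prec X Y ↔ entL Sg X ≤ entL Sg Y)) := by
  let H : AdiabaticOrder ι Γ := ⟨prec, hperm, A1, A2, A3, A4, A5, A6, CH⟩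
  by_cases href : ∃ k, ∃ w₀ w₁ : Γ k, S k w₀ < S k w₁
  · obtain ⟨k, w₀, w₁, hw⟩ := href
    have hw₀₁ : H.prec [(1, ⟨k, w₀⟩)] [(1, ⟨k, w₁⟩)] :=
      (AdiabaticOrder.prec_singleton_iff_entropy (hS k) one_pos).2 hw.le
    have hw₁₀ : ¬ H.prec [(1, ⟨k, w₁⟩)] [(1, ⟨k, w₀⟩)] := by
      rwa [AdiabaticOrder.prec_singleton_iff_entropy (hS k) one_pos, not_le]
    choose a ha hcal using fun i => AdiabaticOrder.exists_isCalibrated (H := H) (hS i) hw₀₁ hw₁₀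
    exact ⟨a, 0, fun σ => a σ.1 * S σ.1 σ.2, ha, fun i x => (add_zero _).symm,
      fun X Y => entL_append _, fun t X => entL_scaleL _, fun X Y hX hY hXY =>
        AdiabaticOrder.prec_iff_entL_le_of_isCalibrated (H := H) (hS k) hw hcal hX hY hXY⟩
  · simp only [not_exists, not_lt] at href
    exact ⟨1, 0, fun σ => S σ.1 σ.2, fun _ => one_pos, fun i x => by simp,
      fun X Y => entL_append _, fun t X => entL_scaleL _, fun X Y hX _ hXY =>
        AdiabaticOrder.prec_iff_entL_le_of_entropy_const (H := H) hS
          (fun i x y => (href i y x).antisymm (href i x y)) hX hXY⟩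
end

section
/- Carnot bound: for a machine undergoing a cyclic adiabatic process coupled to a high-temperature reservoir delivering energy Q₁ (final temperature T₁) and a low-temperature reservoir absorbing energy −Q₀ (final temperature T₀ < T₁), one has Q₁/T₁ + Q₀/T₀ ≤ 0, and hence the efficiency η = (Q₁+Q₀)/Q₁ satisfies η ≤ 1 − T₀/T₁ when Q₁ > 0. -/
/-- The Carnot efficiency bound (Lieb–Yngvason, Eqs. (5.6)–(5.10)): a machine
undergoing a cyclic adiabatic process, coupled to a high-temperature reservoir
delivering energy `Q₁` with final temperature `T₁` and a low-temperature
reservoir absorbing energy `−Q₀` with final temperature `T₀ < T₁`, satisfies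
`Q₁/T₁ + Q₀/T₀ ≤ 0`; hence, if `Q₁ > 0`, the efficiency `η = (Q₁+Q₀)/Q₁`
satisfies `η ≤ 1 − T₀/T₁`.  Here `ΔS₁`, `ΔS₀` are the machine's entropy changes
in the two steps: the entropy principle together with concavity of the
reservoir entropy gives `ΔSᵢ − Qᵢ/Tᵢ ≥ 0`, and cyclicity gives
`ΔS₁ + ΔS₀ = 0`. -/
theorem carnot_efficiency_bound (T₀ T₁ Q₀ Q₁ ΔS₀ ΔS₁ : ℝ)
    (hT₀ : 0 < T₀) (hT : T₀ < T₁)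
    (hstep₁ : 0 ≤ ΔS₁ - Q₁ / T₁)
    (hstep₀ : 0 ≤ ΔS₀ - Q₀ / T₀)
    (hcyclic : ΔS₁ + ΔS₀ = 0) :
    Q₁ / T₁ + Q₀ / T₀ ≤ 0 ∧
    (0 < Q₁ → (Q₁ + Q₀) / Q₁ ≤ 1 - T₀ / T₁) := by
  have hT₁ : 0 < T₁ := hT₀.trans hT
  have h1 : Q₁ / T₁ + Q₀ / T₀ ≤ 0 := by linarith
  refine ⟨h1, fun hQ₁ => ?_⟩
  rw [div_le_iff₀ hQ₁]
  have h2 : Q₀ / T₀ ≤ - (Q₁ / T₁) := by linarith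
  have h3 : Q₀ ≤ - (Q₁ / T₁) * T₀ := (div_le_iff₀ hT₀).mp h2
  have h4 : Q₁ / T₁ * T₀ ≤ Q₁ / T₁ * T₁ := by
    apply mul_le_mul_of_nonneg_left hT.le (by positivity)
  have h5 : Q₁ / T₁ * T₁ = Q₁ := div_mul_cancel₀ _ hT₁.ne'
  have : (1 - T₀ / T₁) * Q₁ = Q₁ - Q₁ / T₁ * T₀ := by
    field_simp
  linarith
end

section
/- Heat flows from hot to cold: if two states X and Y of simple systems with T(X) > T(Y) are brought into thermal contact with fixed work coordinates, yielding (X,Y) ≺ θ(X,Y) ∼ (X',Y') with U_{X'} + U_{Y'} = U_X + U_Y and T(X') = T(Y') = T*, then T(Y) ≤ T* ≤ T(X) (with at least one inequality strict), and hence energy flows from the system at higher temperature to the one at lower temperature (U_{X'} ≤ U_X and U_{Y'} ≥ U_Y). -/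
/-- Heat flows from hot to cold (Step 6 in the proof of Theorem 5 of
Lieb–Yngvason): two simple systems with fixed work coordinates have temperatures
`T₁`, `T₂` as strictly increasing positive functions of their energies.  If
states with energies `U_X`, `U_Y` and `T₁(U_X) > T₂(U_Y)` are brought into
thermal contact, producing by A11, A12 a thermal splitting with energies
`U_X'`, `U_Y'` satisfying conservation `U_X' + U_Y' = U_X + U_Y` and equal final
temperatures `T₁(U_X') = T₂(U_Y') = T*`, then `T₂(U_Y) ≤ T* ≤ T₁(U_X)` with at
least one strict inequality, and energy flows from the hotter to the colder
system: `U_X' ≤ U_X` and `U_Y ≤ U_Y'`. -/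
theorem heat_flows_from_hot_to_cold
    (T₁ T₂ : ℝ → ℝ)
    (hpos₁ : ∀ U, 0 < T₁ U) (hpos₂ : ∀ U, 0 < T₂ U)
    (hmono₁ : StrictMono T₁) (hmono₂ : StrictMono T₂)
    (U_X U_Y U_X' U_Y' : ℝ)
    (hconserv : U_X' + U_Y' = U_X + U_Y)
    (hfinal : T₁ U_X' = T₂ U_Y')
    (hhot : T₂ U_Y < T₁ U_X) :
    (T₂ U_Y ≤ T₁ U_X' ∧ T₁ U_X' ≤ T₁ U_X) ∧
    (T₂ U_Y < T₁ U_X' ∨ T₁ U_X' < T₁ U_X) ∧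
    U_X' ≤ U_X ∧ U_Y ≤ U_Y' := by
  have hX : U_X' ≤ U_X := by
    by_contra h
    push_neg at h
    have hY : U_Y' < U_Y := by linarith
    have h1 : T₁ U_X < T₁ U_X' := hmono₁ h
    have h2 : T₂ U_Y' < T₂ U_Y := hmono₂ hY
    linarith [hfinal]
  have hY : U_Y ≤ U_Y' := by linarith
  have h1 : T₁ U_X' ≤ T₁ U_X := hmono₁.monotone hX
  have h2 : T₂ U_Y ≤ T₂ U_Y' := hmono₂.monotone hY
  refine ⟨⟨by linarith, h1⟩, ?_, hX, hY⟩
  by_contra h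
  push_neg at h
  linarith [h.1, h.2]
end
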